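/- arXiv:1110.0025 — 9 statements merged into one kernel-verified Lean document; each statement's English description precedes it below -/
import Mathlib

section
/- If the algorithm k is maximal in its range at V, i.e., for every w ∈ V, g(w, k(w)) = max{ g(w, o) : o ∈ 𝒪 } where 𝒪 = { k(w') : w' ∈ V }, then every VCG-based mechanism with output algorithm k is truthful. -/
/-- if the output algorithm `k` is maximal in its range at `V`
(for every `w`, `g(w, k(w))` is the maximum of `g(w, ·)` over the range of `k`),
then every VCG-based mechanism with output algorithm `k` is truthful. -/
theorem stmt_1 {O : Type*} [Fintype O] [Nonempty O] {n : ℕ} (hn : 0 < n)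
    (k : (Fin n → O → ℝ) → O) (p : Fin n → (Fin n → O → ℝ) → ℝ)
    (h : Fin n → (Fin n → O → ℝ) → ℝ)
    (hInd : ∀ (i : Fin n) (w w' : Fin n → O → ℝ),
      (∀ j, j ≠ i → w j = w' j) → h i w = h i w')
    (hp : ∀ (i : Fin n) (w : Fin n → O → ℝ),
      p i w = (∑ j ∈ Finset.univ.erase i, w j (k w)) + h i w)
    (hmax : ∀ w : Fin n → O → ℝ,
      IsGreatest {r : ℝ | ∃ w' : Fin n → O → ℝ, r = ∑ i, w i (k w')}
        (∑ i, w i (k w))) :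
    ∀ (i : Fin n) (v : O → ℝ) (w : Fin n → O → ℝ),
      v (k (Function.update w i v)) + p i (Function.update w i v) ≥
        v (k w) + p i w := by
  intro i v w
  set w' := Function.update w i v with hw'
  have hne : ∀ j ∈ Finset.univ.erase i, w' j = w j := by
    intro j hj
    exact Function.update_of_ne (Finset.ne_of_mem_erase hj) _ _
  have hh : h i w' = h i w := hInd i w' w (fun j hj => by
    exact Function.update_of_ne hj _ _)
  have hsum : ∀ o : O, (∑ j, w' j o) = v o + ∑ j ∈ Finset.univ.erase i, w j o := by
    intro o
    rw [← Finset.add_sum_erase _ _ (Finset.mem_univ i)]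
    congr 1
    · simp [hw']
    · exact Finset.sum_congr rfl (fun j hj => by rw [hne j hj])
  have hmem : (∑ j, w' j (k w)) ∈ {r : ℝ | ∃ w'' : Fin n → O → ℝ, r = ∑ j, w' j (k w'')} :=
    ⟨w, rfl⟩
  have hge := (hmax w').2 hmem
  rw [hp i w', hp i w, hh]
  have e1 : (∑ j ∈ Finset.univ.erase i, w' j (k w')) = ∑ j ∈ Finset.univ.erase i, w j (k w') :=
    Finset.sum_congr rfl (fun j hj => by rw [hne j hj])
  have := hsum (k w')
  have := hsum (k w)
  rw [e1] at *
  linarith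
end

section
/- If a VCG-based mechanism (k, p) for the combinatorial auction problem is truthful, then its allocation algorithm k is maximal in its range at Ṽ: for every v ∈ Ṽ, g(v, k(v)) = max{ g(v, o) : o ∈ 𝒪 }, where 𝒪 = { k(w) : w ∈ Ṽ } is the range of k at Ṽ. -/
set_option linter.unusedSectionVars false
set_option linter.unusedVariables false


/-- A combinatorial-auction valuation: a real-valued function on bundles of items that
is zero on the empty bundle and monotone (hence nonnegative). -/
structure CAValuation (S : Type*) where
  val : Finset S → ℝ
  val_empty : val ∅ = 0
  mono : ∀ s t : Finset S, s ⊆ t → val s ≤ val t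

/-- An allocation: an `n`-tuple of pairwise disjoint bundles of items. -/
abbrev CAAllocation (S : Type*) (n : ℕ) : Type _ :=
  {f : Fin n → Finset S // ∀ i j : Fin n, i ≠ j → Disjoint (f i) (f j)}

/-- The total welfare of allocation `x` at valuation profile `v`. -/
def welfare {S : Type*} {n : ℕ} (v : Fin n → CAValuation S) (x : CAAllocation S n) : ℝ :=
  ∑ i, (v i).val (x.1 i)

namespace Stmt4Aux

variable {S : Type*} [DecidableEq S] [Fintype S] {n : ℕ}

theorem CAValuation.ext' {a b : CAValuation S} (h : ∀ s, a.val s = b.val s) : a = b := by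
  cases a; cases b
  simp only [CAValuation.mk.injEq]
  exact funext h

theorem val_nonneg (u : CAValuation S) (s : Finset S) : 0 ≤ u.val s := by
  have := u.mono ∅ s (Finset.empty_subset s)
  rwa [u.val_empty] at this

theorem val_le_univ (u : CAValuation S) (s : Finset S) : u.val s ≤ u.val Finset.univ :=
  u.mono s Finset.univ (Finset.subset_univ s)

/-- Sum of two valuations. -/
def addV (a b : CAValuation S) : CAValuation S where
  val := fun s => a.val s + b.val s
  val_empty := by rw [a.val_empty, b.val_empty, add_zero]
  mono := fun s t h => add_le_add (a.mono s t h) (b.mono s t h)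

/-- Bonus valuation: worth `M` on supersets of `b` (when `b` is nonempty), `0` otherwise. -/
def bonV (M : ℝ) (hM : 0 ≤ M) (b : Finset S) : CAValuation S where
  val := fun s => if b.Nonempty ∧ b ⊆ s then M else 0
  val_empty := by
    rw [if_neg]
    rintro ⟨hne, hsub⟩
    exact hne.ne_empty (Finset.subset_empty.mp hsub)
  mono := fun s t hst => by
    split_ifs with h1 h2
    · exact le_rfl
    · exact absurd ⟨h1.1, h1.2.trans hst⟩ h2
    · exact hM
    · exact le_rfl

/-- Capped valuation: `u` restricted to the part of the bundle inside `b`. -/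
def capV (u : CAValuation S) (b : Finset S) : CAValuation S where
  val := fun s => u.val (s ∩ b)
  val_empty := by rw [Finset.empty_inter, u.val_empty]
  mono := fun s t h => u.mono _ _ (Finset.inter_subset_inter h (Finset.Subset.refl b))

theorem welfare_nonneg (P : Fin n → CAValuation S) (x : CAAllocation S n) :
    0 ≤ welfare P x :=
  Finset.sum_nonneg fun j _ => val_nonneg _ _

theorem welfare_update (P : Fin n → CAValuation S) (i : Fin n) (z : CAValuation S)
    (x : CAAllocation S n) :
    welfare (Function.update P i z) x
      = welfare P x + (z.val (x.1 i) - (P i).val (x.1 i)) := by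
  unfold welfare
  have h1 : ∑ j ∈ Finset.univ.erase i, ((Function.update P i z) j).val (x.1 j)
      = ∑ j ∈ Finset.univ.erase i, (P j).val (x.1 j) :=
    Finset.sum_congr rfl fun j hj => by
      rw [Function.update_of_ne (Finset.ne_of_mem_erase hj)]
  rw [← Finset.add_sum_erase _ (fun j => ((Function.update P i z) j).val (x.1 j))
      (Finset.mem_univ i),
    ← Finset.add_sum_erase _ (fun j => (P j).val (x.1 j)) (Finset.mem_univ i),
    h1, Function.update_self]
  ring

theorem welfare_addV (core β : Fin n → CAValuation S) (x : CAAllocation S n) :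
    welfare (fun j => addV (core j) (β j)) x
      = welfare core x + ∑ j, (β j).val (x.1 j) := by
  unfold welfare addV
  rw [← Finset.sum_add_distrib]

/-- Mixed profile: first `c` coordinates from `P`, remaining from `Q`. -/
def mixP (P Q : Fin n → CAValuation S) (c : ℕ) : Fin n → CAValuation S :=
  fun j => if (j : ℕ) < c then P j else Q j

theorem mixP_zero (P Q : Fin n → CAValuation S) : mixP P Q 0 = Q :=
  funext fun j => if_neg (Nat.not_lt_zero _)

theorem mixP_top (P Q : Fin n → CAValuation S) {c : ℕ} (hc : n ≤ c) : mixP P Q c = P :=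
  funext fun j => if_pos (lt_of_lt_of_le j.isLt hc)

theorem mixP_self (P Q : Fin n → CAValuation S) {c : ℕ} (hc : c < n) :
    mixP P Q c ⟨c, hc⟩ = Q ⟨c, hc⟩ :=
  if_neg (lt_irrefl c)

theorem mixP_succ (P Q : Fin n → CAValuation S) {c : ℕ} (hc : c < n) :
    mixP P Q (c + 1) = Function.update (mixP P Q c) ⟨c, hc⟩ (P ⟨c, hc⟩) := by
  funext j
  rcases eq_or_ne j ⟨c, hc⟩ with rfl | hj
  · rw [Function.update_self]
    exact if_pos (Nat.lt_succ_self c)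
  · rw [Function.update_of_ne hj]
    have hjc : (j : ℕ) ≠ c := fun h => hj (Fin.ext h)
    show (if (j : ℕ) < c + 1 then P j else Q j) = (if (j : ℕ) < c then P j else Q j)
    by_cases h : (j : ℕ) < c
    · rw [if_pos h, if_pos (Nat.lt_succ_of_lt h)]
    · rw [if_neg h, if_neg fun hlt => h (lt_of_le_of_ne (Nat.lt_succ_iff.mp hlt) hjc)]

theorem mixP_succ_stop (P Q : Fin n → CAValuation S) {c : ℕ} (hc : n ≤ c) :
    mixP P Q (c + 1) = mixP P Q c := by
  rw [mixP_top P Q hc, mixP_top P Q (hc.trans (Nat.le_succ c))]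

/-- `Flt c` : the coordinates `< c`. -/
def Flt (n c : ℕ) : Finset (Fin n) := Finset.univ.filter (fun j : Fin n => (j : ℕ) < c)

/-- `Fge c` : the coordinates `≥ c`. -/
def Fge (n c : ℕ) : Finset (Fin n) := Finset.univ.filter (fun j : Fin n => ¬ (j : ℕ) < c)

theorem Flt_zero : Flt n 0 = ∅ := by
  ext j; simp [Flt]

theorem Flt_top {c : ℕ} (hc : n ≤ c) : Flt n c = Finset.univ := by
  ext j; simp [Flt, lt_of_lt_of_le j.isLt hc]

theorem Fge_zero : Fge n 0 = Finset.univ := by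
  ext j; simp [Fge]

theorem Fge_top {c : ℕ} (hc : n ≤ c) : Fge n c = ∅ := by
  ext j; simp [Fge, lt_of_lt_of_le j.isLt hc]

theorem not_mem_Flt {c : ℕ} (hc : c < n) : (⟨c, hc⟩ : Fin n) ∉ Flt n c := by
  simp [Flt]

theorem not_mem_Fge_succ {c : ℕ} (hc : c < n) : (⟨c, hc⟩ : Fin n) ∉ Fge n (c + 1) := by
  simp [Fge]

theorem Flt_succ {c : ℕ} (hc : c < n) :
    Flt n (c + 1) = insert ⟨c, hc⟩ (Flt n c) := by
  ext j
  simp only [Flt, Finset.mem_filter, Finset.mem_univ, true_and, Finset.mem_insert]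
  constructor
  · intro hlt
    rcases Nat.lt_succ_iff_lt_or_eq.mp hlt with h | h
    · exact Or.inr h
    · exact Or.inl (Fin.ext h)
  · rintro (rfl | h)
    · exact Nat.lt_succ_self c
    · exact Nat.lt_succ_of_lt h

theorem Fge_eq_insert {c : ℕ} (hc : c < n) :
    Fge n c = insert ⟨c, hc⟩ (Fge n (c + 1)) := by
  ext j
  simp only [Fge, Finset.mem_filter, Finset.mem_univ, true_and, Finset.mem_insert, not_lt]
  constructor
  · intro hle
    rcases eq_or_lt_of_le hle with h | h
    · exact Or.inl (Fin.ext h.symm)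
    · exact Or.inr h
  · rintro (rfl | h)
    · exact le_rfl
    · exact le_of_lt h

theorem sum_Flt_add_sum_Fge (c : ℕ) (f : Fin n → ℝ) :
    ∑ j ∈ Flt n c, f j + ∑ j ∈ Fge n c, f j = ∑ j, f j :=
  Finset.sum_filter_add_sum_filter_not Finset.univ _ f

theorem welfare_mixP (P Q : Fin n → CAValuation S) (c : ℕ) (x : CAAllocation S n) :
    welfare (mixP P Q c) x
      = ∑ j ∈ Flt n c, (P j).val (x.1 j) + ∑ j ∈ Fge n c, (Q j).val (x.1 j) := by
  unfold welfare
  rw [← sum_Flt_add_sum_Fge c (fun j => ((mixP P Q c) j).val (x.1 j))]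
  congr 1
  · refine Finset.sum_congr rfl fun j hj => ?_
    have : (j : ℕ) < c := by simpa [Flt] using hj
    simp [mixP, this]
  · refine Finset.sum_congr rfl fun j hj => ?_
    have : ¬ (j : ℕ) < c := by simpa [Fge] using hj
    simp [mixP, this]

section Main

variable (v w : Fin n → CAValuation S) (o : CAAllocation S n)

/-- A bound on all welfares occurring. -/
def BB : ℝ := ∑ j : Fin n, ((v j).val Finset.univ + (w j).val Finset.univ)

theorem BB_nonneg : 0 ≤ BB v w :=
  Finset.sum_nonneg fun j _ => add_nonneg (val_nonneg _ _) (val_nonneg _ _)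

/-- The large bonus constant. -/
def MM : ℝ := BB v w + 1

theorem MM_nonneg : 0 ≤ MM v w := by
  have := BB_nonneg v w
  unfold MM; linarith

/-- Bonus valuations, one per agent, supported above `o`. -/
def bon (j : Fin n) : CAValuation S := bonV (MM v w) (MM_nonneg v w) (o.1 j)

/-- Capped versions of `w`. -/
def capw (j : Fin n) : CAValuation S := capV (w j) (o.1 j)

/-- Bonus value at the target bundle. -/
def MJ (j : Fin n) : ℝ := (bon v w o j).val (o.1 j)

theorem bon_le (j : Fin n) (s : Finset S) : (bon v w o j).val s ≤ MJ v w o j := by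
  unfold MJ bon bonV
  dsimp only
  split_ifs with h1 h2
  · exact le_rfl
  · exact absurd ⟨h1.1, Finset.Subset.refl _⟩ h2
  · exact MM_nonneg v w
  · exact le_rfl

theorem bon_eq_of_superset {j : Fin n} {s : Finset S} (h : o.1 j ⊆ s) :
    (bon v w o j).val s = MJ v w o j := by
  unfold MJ bon bonV
  dsimp only
  by_cases hne : (o.1 j).Nonempty
  · rw [if_pos ⟨hne, h⟩, if_pos ⟨hne, Finset.Subset.refl _⟩]
  · rw [if_neg (fun hc => hne hc.1), if_neg (fun hc => hne hc.1)]

theorem bon_eq_of_not_superset {j : Fin n} {s : Finset S} (h : ¬ o.1 j ⊆ s) :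
    (bon v w o j).val s = MJ v w o j - MM v w := by
  have hne : (o.1 j).Nonempty := by
    rw [Finset.nonempty_iff_ne_empty]
    intro he
    rw [he] at h
    exact h (Finset.empty_subset s)
  unfold MJ bon bonV
  dsimp only
  rw [if_neg (fun hc => h hc.2), if_pos ⟨hne, Finset.Subset.refl _⟩]
  ring

/-- total bonus. -/
def TotM : ℝ := ∑ j, MJ v w o j

theorem sum_bon_of_superset {x : CAAllocation S n} (hx : ∀ j, o.1 j ⊆ x.1 j) :
    ∑ j, (bon v w o j).val (x.1 j) = TotM v w o :=
  Finset.sum_congr rfl fun j _ => bon_eq_of_superset v w o (hx j)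

theorem sum_bon_le (x : CAAllocation S n) :
    ∑ j, (bon v w o j).val (x.1 j) ≤ TotM v w o :=
  Finset.sum_le_sum fun j _ => bon_le v w o j _

theorem sum_bon_of_not_superset {x : CAAllocation S n} (hx : ¬ ∀ j, o.1 j ⊆ x.1 j) :
    ∑ j, (bon v w o j).val (x.1 j) ≤ TotM v w o - MM v w := by
  push_neg at hx
  obtain ⟨j0, hj0⟩ := hx
  have h1 : (bon v w o j0).val (x.1 j0) = MJ v w o j0 - MM v w :=
    bon_eq_of_not_superset v w o hj0
  have h2 : ∑ j ∈ Finset.univ.erase j0, (bon v w o j).val (x.1 j)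
      ≤ ∑ j ∈ Finset.univ.erase j0, MJ v w o j :=
    Finset.sum_le_sum fun j _ => bon_le v w o j _
  have e1 : (bon v w o j0).val (x.1 j0)
        + ∑ j ∈ Finset.univ.erase j0, (bon v w o j).val (x.1 j)
      = ∑ j, (bon v w o j).val (x.1 j) :=
    Finset.add_sum_erase _ (fun j => (bon v w o j).val (x.1 j)) (Finset.mem_univ j0)
  have e2 : MJ v w o j0 + ∑ j ∈ Finset.univ.erase j0, MJ v w o j = TotM v w o :=
    Finset.add_sum_erase _ (fun j => MJ v w o j) (Finset.mem_univ j0)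
  unfold TotM
  rw [← e1]
  unfold TotM at e2
  linarith

theorem welfare_le_BB (core : Fin n → CAValuation S)
    (hcore : ∀ j s, (core j).val s ≤ (v j).val Finset.univ + (w j).val Finset.univ)
    (x : CAAllocation S n) : welfare core x ≤ BB v w :=
  Finset.sum_le_sum fun j _ => hcore j _

theorem welfare_w_le (x : CAAllocation S n) : welfare w x ≤ BB v w :=
  welfare_le_BB v w w
    (fun j s => le_add_of_nonneg_of_le (val_nonneg _ _) (val_le_univ _ _)) x

/-- Phase I profiles: bonuses added to `w` on the first `c` coordinates. -/
def PI (c : ℕ) : Fin n → CAValuation S :=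
  mixP (fun j => addV (w j) (bon v w o j)) w c

/-- Phase I.5 profiles: all bonuses, `w` capped on the first `c` coordinates. -/
def PC (c : ℕ) : Fin n → CAValuation S :=
  fun j => addV ((mixP (capw w o) w c) j) (bon v w o j)

/-- Phase II profiles: all bonuses, `v` on first `c` coordinates, capped `w` on the rest. -/
def PT (c : ℕ) : Fin n → CAValuation S :=
  fun j => addV ((mixP v (capw w o) c) j) (bon v w o j)

/-- Phase III profiles: `v` on the first `c` coordinates, `v` plus bonus on the rest. -/
def PU (c : ℕ) : Fin n → CAValuation S :=
  mixP v (fun j => addV (v j) (bon v w o j)) c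

theorem welfare_PI (c : ℕ) (x : CAAllocation S n) :
    welfare (PI v w o c) x
      = welfare w x + ∑ j ∈ Flt n c, (bon v w o j).val (x.1 j) := by
  unfold PI
  rw [welfare_mixP]
  have : ∑ j ∈ Flt n c, (addV (w j) (bon v w o j)).val (x.1 j)
      = ∑ j ∈ Flt n c, ((w j).val (x.1 j) + (bon v w o j).val (x.1 j)) :=
    Finset.sum_congr rfl fun j _ => rfl
  rw [this, Finset.sum_add_distrib]
  have hsplit := sum_Flt_add_sum_Fge (n := n) c (fun j => (w j).val (x.1 j))
  unfold welfare
  linarith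

theorem capw_superset {j : Fin n} {s : Finset S} (h : o.1 j ⊆ s) :
    (capw w o j).val s = (w j).val (o.1 j) := by
  show (w j).val (s ∩ o.1 j) = (w j).val (o.1 j)
  rw [Finset.inter_eq_right.mpr h]

theorem core_bound_capw (c : ℕ) :
    ∀ (j : Fin n) s, ((mixP (capw w o) w c) j).val s
      ≤ (v j).val Finset.univ + (w j).val Finset.univ := by
  intro j s
  unfold mixP
  split_ifs
  · exact le_add_of_nonneg_of_le (val_nonneg _ _)
      ((w j).mono _ _ (Finset.subset_univ _))
  · exact le_add_of_nonneg_of_le (val_nonneg _ _) (val_le_univ _ _)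

theorem core_bound_vcap (c : ℕ) :
    ∀ (j : Fin n) s, ((mixP v (capw w o) c) j).val s
      ≤ (v j).val Finset.univ + (w j).val Finset.univ := by
  intro j s
  unfold mixP
  split_ifs
  · exact le_add_of_le_of_nonneg (val_le_univ _ _) (val_nonneg _ _)
  · exact le_add_of_nonneg_of_le (val_nonneg _ _)
      ((w j).mono _ _ (Finset.subset_univ _))

theorem welfare_PC (c : ℕ) (x : CAAllocation S n) :
    welfare (PC v w o c) x
      = welfare (mixP (capw w o) w c) x + ∑ j, (bon v w o j).val (x.1 j) :=
  welfare_addV _ _ x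

theorem welfare_PT (c : ℕ) (x : CAAllocation S n) :
    welfare (PT v w o c) x
      = welfare (mixP v (capw w o) c) x + ∑ j, (bon v w o j).val (x.1 j) :=
  welfare_addV _ _ x

theorem welfare_PT_inS (c : ℕ) (x : CAAllocation S n) (hx : ∀ j, o.1 j ⊆ x.1 j) :
    welfare (PT v w o c) x
      = ∑ j ∈ Flt n c, (v j).val (x.1 j) + ∑ j ∈ Fge n c, (w j).val (o.1 j)
        + TotM v w o := by
  rw [welfare_PT, welfare_mixP, sum_bon_of_superset v w o hx]
  have : ∑ j ∈ Fge n c, (capw w o j).val (x.1 j)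
      = ∑ j ∈ Fge n c, (w j).val (o.1 j) :=
    Finset.sum_congr rfl fun j _ => capw_superset w o (hx j)
  rw [this]

theorem welfare_PU (c : ℕ) (x : CAAllocation S n) :
    welfare (PU v w o c) x
      = welfare v x + ∑ j ∈ Fge n c, (bon v w o j).val (x.1 j) := by
  unfold PU
  rw [welfare_mixP]
  have h1 : ∑ j ∈ Fge n c, (addV (v j) (bon v w o j)).val (x.1 j)
      = ∑ j ∈ Fge n c, ((v j).val (x.1 j) + (bon v w o j).val (x.1 j)) :=
    Finset.sum_congr rfl fun j _ => rfl
  rw [h1, Finset.sum_add_distrib]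
  have hsplit := sum_Flt_add_sum_Fge (n := n) c (fun j => (v j).val (x.1 j))
  unfold welfare
  linarith

theorem PC_zero : PC v w o 0 = PI v w o n := by
  funext j
  unfold PC PI
  rw [mixP_zero (capw w o) w, mixP_top (fun j => addV (w j) (bon v w o j)) w le_rfl]

theorem PC_succ {c : ℕ} (hc : c < n) :
    PC v w o (c + 1)
      = Function.update (PC v w o c) ⟨c, hc⟩
          (addV (capw w o ⟨c, hc⟩) (bon v w o ⟨c, hc⟩)) := by
  funext j
  rcases eq_or_ne j ⟨c, hc⟩ with rfl | hj
  · rw [Function.update_self]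
    unfold PC
    rw [mixP_succ _ _ hc, Function.update_self]
  · rw [Function.update_of_ne hj]
    unfold PC
    rw [mixP_succ _ _ hc, Function.update_of_ne hj]

theorem PC_succ_stop {c : ℕ} (hc : n ≤ c) : PC v w o (c + 1) = PC v w o c := by
  funext j
  unfold PC
  rw [mixP_succ_stop _ _ hc]

theorem PT_zero : PT v w o 0 = PC v w o n := by
  funext j
  unfold PT PC
  rw [mixP_zero v (capw w o), mixP_top (capw w o) w le_rfl]

theorem PT_succ {c : ℕ} (hc : c < n) :
    PT v w o (c + 1)
      = Function.update (PT v w o c) ⟨c, hc⟩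
          (addV (v ⟨c, hc⟩) (bon v w o ⟨c, hc⟩)) := by
  funext j
  rcases eq_or_ne j ⟨c, hc⟩ with rfl | hj
  · rw [Function.update_self]
    unfold PT
    rw [mixP_succ _ _ hc, Function.update_self]
  · rw [Function.update_of_ne hj]
    unfold PT
    rw [mixP_succ _ _ hc, Function.update_of_ne hj]

theorem PT_succ_stop {c : ℕ} (hc : n ≤ c) : PT v w o (c + 1) = PT v w o c := by
  funext j
  unfold PT
  rw [mixP_succ_stop _ _ hc]

theorem PU_zero : PU v w o 0 = PT v w o n := by
  funext j
  unfold PU PT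
  rw [mixP_zero v (fun j => addV (v j) (bon v w o j)), mixP_top v (capw w o) le_rfl]

/-- Phase I: adding the bonuses to `w` one agent at a time keeps the chosen
allocation exactly `o = k w`, thanks to `w ∈ Ṽ`. -/
theorem phase1 (k : (Fin n → CAValuation S) → CAAllocation S n)
    (hA : ∀ (P : Fin n → CAValuation S) (i : Fin n) (z : CAValuation S),
      welfare (Function.update P i z) (k (Function.update P i z))
        ≥ welfare (Function.update P i z) (k P))
    (hB : ∀ (P : Fin n → CAValuation S) (i : Fin n) (z : CAValuation S),
      welfare P (k P) ≥ welfare P (k (Function.update P i z)))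
    (hw : ∀ x y : CAAllocation S n, x ≠ y → welfare w x ≠ welfare w y)
    (ho : k w = o) : ∀ c, k (PI v w o c) = o := by
  intro c
  induction c with
  | zero =>
    rw [show PI v w o 0 = w from mixP_zero _ _]
    exact ho
  | succ c ih =>
    by_cases hc : c < n
    · set i : Fin n := (⟨c, hc⟩ : Fin n) with hidef
      have hup : PI v w o (c + 1)
          = Function.update (PI v w o c) i (addV (w i) (bon v w o i)) :=
        mixP_succ _ _ hc
      set m := k (PI v w o (c + 1)) with hm
      have hA' : welfare (PI v w o (c + 1)) m ≥ welfare (PI v w o (c + 1)) o := by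
        have h0 := hA (PI v w o c) i (addV (w i) (bon v w o i))
        rw [← hup, ih] at h0
        exact h0
      have hB' : welfare (PI v w o c) o ≥ welfare (PI v w o c) m := by
        have h0 := hB (PI v w o c) i (addV (w i) (bon v w o i))
        rw [← hup, ih] at h0
        exact h0
      have hPIi : PI v w o c i = w i := mixP_self _ _ hc
      have hdiff : ∀ x : CAAllocation S n,
          welfare (PI v w o (c + 1)) x
            = welfare (PI v w o c) x + (bon v w o i).val (x.1 i) := by
        intro x
        rw [hup, welfare_update, hPIi]
        have hval : (addV (w i) (bon v w o i)).val (x.1 i)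
            = (w i).val (x.1 i) + (bon v w o i).val (x.1 i) := rfl
        rw [hval]
        ring
      have h1 : welfare (PI v w o c) m + (bon v w o i).val (m.1 i)
          ≥ welfare (PI v w o c) o + (bon v w o i).val (o.1 i) := by
        rw [← hdiff, ← hdiff]
        exact hA'
      have h2 : (bon v w o i).val (m.1 i) ≤ (bon v w o i).val (o.1 i) :=
        bon_le v w o i _
      have heq : welfare (PI v w o c) m = welfare (PI v w o c) o :=
        le_antisymm hB' (by linarith)
      rw [welfare_PI, welfare_PI] at heq
      have hble : ∀ j ∈ Flt n c,
          (bon v w o j).val (m.1 j) ≤ (bon v w o j).val (o.1 j) :=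
        fun j _ => bon_le v w o j _
      have hsum : ∑ j ∈ Flt n c, (bon v w o j).val (m.1 j)
          = ∑ j ∈ Flt n c, (bon v w o j).val (o.1 j) := by
        by_contra hne
        have hex : ∃ j0 ∈ Flt n c,
            (bon v w o j0).val (m.1 j0) ≠ (bon v w o j0).val (o.1 j0) := by
          by_contra hall
          push_neg at hall
          exact hne (Finset.sum_congr rfl hall)
        obtain ⟨j0, hj0mem, hj0⟩ := hex
        have hnot : ¬ o.1 j0 ⊆ m.1 j0 := fun hs =>
          hj0 (bon_eq_of_superset v w o hs)
        have hval : (bon v w o j0).val (m.1 j0)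
            = MJ v w o j0 - MM v w := bon_eq_of_not_superset v w o hnot
        have e1 : (bon v w o j0).val (m.1 j0)
              + ∑ j ∈ (Flt n c).erase j0, (bon v w o j).val (m.1 j)
            = ∑ j ∈ Flt n c, (bon v w o j).val (m.1 j) :=
          Finset.add_sum_erase _ (fun j => (bon v w o j).val (m.1 j)) hj0mem
        have e2 : (bon v w o j0).val (o.1 j0)
              + ∑ j ∈ (Flt n c).erase j0, (bon v w o j).val (o.1 j)
            = ∑ j ∈ Flt n c, (bon v w o j).val (o.1 j) :=
          Finset.add_sum_erase _ (fun j => (bon v w o j).val (o.1 j)) hj0mem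
        have hrest : ∑ j ∈ (Flt n c).erase j0, (bon v w o j).val (m.1 j)
            ≤ ∑ j ∈ (Flt n c).erase j0, (bon v w o j).val (o.1 j) :=
          Finset.sum_le_sum fun j hj => hble j (Finset.mem_of_mem_erase hj)
        have hMJ : (bon v w o j0).val (o.1 j0) = MJ v w o j0 := rfl
        have hwm : welfare w m ≤ BB v w := welfare_w_le v w m
        have hwo : 0 ≤ welfare w o := welfare_nonneg w o
        have hMM : MM v w = BB v w + 1 := rfl
        linarith
      have hweq : welfare w m = welfare w o := by linarith
      by_contra hmo
      exact hw m o hmo hweq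
    · rw [show PI v w o (c + 1) = PI v w o c from
        mixP_succ_stop _ _ (le_of_not_gt hc)]
      exact ih

/-- Phase I.5: capping `w` at `o`, one agent at a time, keeps all agents holding
supersets of their `o`-bundles. -/
theorem phase15 (k : (Fin n → CAValuation S) → CAAllocation S n)
    (hA : ∀ (P : Fin n → CAValuation S) (i : Fin n) (z : CAValuation S),
      welfare (Function.update P i z) (k (Function.update P i z))
        ≥ welfare (Function.update P i z) (k P))
    (hB : ∀ (P : Fin n → CAValuation S) (i : Fin n) (z : CAValuation S),
      welfare P (k P) ≥ welfare P (k (Function.update P i z)))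
    (hw : ∀ x y : CAAllocation S n, x ≠ y → welfare w x ≠ welfare w y)
    (ho : k w = o) : ∀ c, ∀ j, o.1 j ⊆ (k (PC v w o c)).1 j := by
  intro c
  induction c with
  | zero =>
    have h0 : k (PC v w o 0) = o := by
      rw [PC_zero]
      exact phase1 v w o k hA hB hw ho n
    rw [h0]
    exact fun j => Finset.Subset.refl _
  | succ c ih =>
    by_cases hc : c < n
    · set i : Fin n := (⟨c, hc⟩ : Fin n) with hidef
      have hup : PC v w o (c + 1)
          = Function.update (PC v w o c) i (addV (capw w o i) (bon v w o i)) :=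
        PC_succ v w o hc
      have hA' : welfare (PC v w o (c + 1)) (k (PC v w o (c + 1)))
          ≥ welfare (PC v w o (c + 1)) (k (PC v w o c)) := by
        have h0 := hA (PC v w o c) i (addV (capw w o i) (bon v w o i))
        rw [← hup] at h0
        exact h0
      have hq : welfare (PC v w o (c + 1)) (k (PC v w o c))
          = welfare (mixP (capw w o) w (c + 1)) (k (PC v w o c)) + TotM v w o := by
        rw [welfare_PC, sum_bon_of_superset v w o ih]
      have hq2 : TotM v w o ≤ welfare (PC v w o (c + 1)) (k (PC v w o c)) := by
        have := welfare_nonneg (mixP (capw w o) w (c + 1)) (k (PC v w o c))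
        linarith
      by_contra hnot
      have hm1 : welfare (PC v w o (c + 1)) (k (PC v w o (c + 1)))
          = welfare (mixP (capw w o) w (c + 1)) (k (PC v w o (c + 1)))
            + ∑ j, (bon v w o j).val ((k (PC v w o (c + 1))).1 j) :=
        welfare_PC v w o _ _
      have hm2 : ∑ j, (bon v w o j).val ((k (PC v w o (c + 1))).1 j)
          ≤ TotM v w o - MM v w := sum_bon_of_not_superset v w o hnot
      have hm3 : welfare (mixP (capw w o) w (c + 1)) (k (PC v w o (c + 1)))
          ≤ BB v w := welfare_le_BB v w _ (core_bound_capw v w o (c + 1)) _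
      have hMM : MM v w = BB v w + 1 := rfl
      linarith
    · rw [PC_succ_stop v w o (le_of_not_gt hc)]
      exact ih

/-- Phase II: swapping in `v` (with the bonuses), one agent at a time. -/
theorem phase2 (k : (Fin n → CAValuation S) → CAAllocation S n)
    (hA : ∀ (P : Fin n → CAValuation S) (i : Fin n) (z : CAValuation S),
      welfare (Function.update P i z) (k (Function.update P i z))
        ≥ welfare (Function.update P i z) (k P))
    (hB : ∀ (P : Fin n → CAValuation S) (i : Fin n) (z : CAValuation S),
      welfare P (k P) ≥ welfare P (k (Function.update P i z)))
    (hw : ∀ x y : CAAllocation S n, x ≠ y → welfare w x ≠ welfare w y)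
    (ho : k w = o) :
    ∀ c, (∀ j, o.1 j ⊆ (k (PT v w o c)).1 j)
      ∧ ∑ j ∈ Flt n c, (v j).val (o.1 j)
          ≤ ∑ j ∈ Flt n c, (v j).val ((k (PT v w o c)).1 j) := by
  intro c
  induction c with
  | zero =>
    constructor
    · rw [PT_zero]
      exact phase15 v w o k hA hB hw ho n
    · rw [Flt_zero]
      simp
  | succ c ih =>
    obtain ⟨hy, hs⟩ := ih
    by_cases hc : c < n
    · set i : Fin n := (⟨c, hc⟩ : Fin n) with hidef
      have hup : PT v w o (c + 1)
          = Function.update (PT v w o c) i (addV (v i) (bon v w o i)) :=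
        PT_succ v w o hc
      have hA' : welfare (PT v w o (c + 1)) (k (PT v w o (c + 1)))
          ≥ welfare (PT v w o (c + 1)) (k (PT v w o c)) := by
        have h0 := hA (PT v w o c) i (addV (v i) (bon v w o i))
        rw [← hup] at h0
        exact h0
      -- the value of the old allocation at the new profile
      have hyy : welfare (PT v w o (c + 1)) (k (PT v w o c))
          = ∑ j ∈ Flt n (c + 1), (v j).val ((k (PT v w o c)).1 j)
            + ∑ j ∈ Fge n (c + 1), (w j).val (o.1 j) + TotM v w o :=
        welfare_PT_inS v w o (c + 1) _ hy
      have hvsplit : ∑ j ∈ Flt n (c + 1), (v j).val ((k (PT v w o c)).1 j)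
          = (v i).val ((k (PT v w o c)).1 i)
            + ∑ j ∈ Flt n c, (v j).val ((k (PT v w o c)).1 j) := by
        rw [Flt_succ hc, Finset.sum_insert (not_mem_Flt hc)]
      have hvo_split : ∑ j ∈ Flt n (c + 1), (v j).val (o.1 j)
          = (v i).val (o.1 i) + ∑ j ∈ Flt n c, (v j).val (o.1 j) := by
        rw [Flt_succ hc, Finset.sum_insert (not_mem_Flt hc)]
      have hvi : (v i).val (o.1 i) ≤ (v i).val ((k (PT v w o c)).1 i) :=
        (v i).mono _ _ (hy i)
      have hlow : ∑ j ∈ Flt n (c + 1), (v j).val (o.1 j)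
            + ∑ j ∈ Fge n (c + 1), (w j).val (o.1 j) + TotM v w o
          ≤ welfare (PT v w o (c + 1)) (k (PT v w o c)) := by
        rw [hyy, hvsplit, hvo_split]
        linarith
      -- the new allocation keeps all bonuses
      have hyInS : ∀ j, o.1 j ⊆ (k (PT v w o (c + 1))).1 j := by
        by_contra hnot
        have hm1 : welfare (PT v w o (c + 1)) (k (PT v w o (c + 1)))
            = welfare (mixP v (capw w o) (c + 1)) (k (PT v w o (c + 1)))
              + ∑ j, (bon v w o j).val ((k (PT v w o (c + 1))).1 j) :=
          welfare_PT v w o _ _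
        have hm2 : ∑ j, (bon v w o j).val ((k (PT v w o (c + 1))).1 j)
            ≤ TotM v w o - MM v w := sum_bon_of_not_superset v w o hnot
        have hm3 : welfare (mixP v (capw w o) (c + 1)) (k (PT v w o (c + 1)))
            ≤ BB v w := welfare_le_BB v w _ (core_bound_vcap v w o (c + 1)) _
        have hMM : MM v w = BB v w + 1 := rfl
        have hnn1 : 0 ≤ ∑ j ∈ Flt n (c + 1), (v j).val (o.1 j) :=
          Finset.sum_nonneg fun j _ => val_nonneg _ _
        have hnn2 : 0 ≤ ∑ j ∈ Fge n (c + 1), (w j).val (o.1 j) :=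
          Finset.sum_nonneg fun j _ => val_nonneg _ _
        linarith
      refine ⟨hyInS, ?_⟩
      have hnew : welfare (PT v w o (c + 1)) (k (PT v w o (c + 1)))
          = ∑ j ∈ Flt n (c + 1), (v j).val ((k (PT v w o (c + 1))).1 j)
            + ∑ j ∈ Fge n (c + 1), (w j).val (o.1 j) + TotM v w o :=
        welfare_PT_inS v w o (c + 1) _ hyInS
      linarith
    · have hstop : PT v w o (c + 1) = PT v w o c := PT_succ_stop v w o (le_of_not_gt hc)
      have hFlt : Flt n (c + 1) = Flt n c := by
        rw [Flt_top (le_of_not_gt hc), Flt_top ((le_of_not_gt hc).trans (Nat.le_succ c))]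
      rw [hstop, hFlt]
      exact ⟨hy, hs⟩

/-- Phase III: removing the bonuses one agent at a time. -/
theorem phase3 (k : (Fin n → CAValuation S) → CAAllocation S n)
    (hA : ∀ (P : Fin n → CAValuation S) (i : Fin n) (z : CAValuation S),
      welfare (Function.update P i z) (k (Function.update P i z))
        ≥ welfare (Function.update P i z) (k P))
    (hB : ∀ (P : Fin n → CAValuation S) (i : Fin n) (z : CAValuation S),
      welfare P (k P) ≥ welfare P (k (Function.update P i z)))
    (hw : ∀ x y : CAAllocation S n, x ≠ y → welfare w x ≠ welfare w y)
    (ho : k w = o) :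
    ∀ c, welfare v o + ∑ j ∈ Fge n c, MJ v w o j
      ≤ welfare (PU v w o c) (k (PU v w o c)) := by
  intro c
  induction c with
  | zero =>
    obtain ⟨hy, hs⟩ := phase2 v w o k hA hB hw ho n
    have hW : welfare (PU v w o 0) (k (PU v w o 0))
        = welfare v (k (PU v w o 0)) + ∑ j ∈ Fge n 0, (bon v w o j).val ((k (PU v w o 0)).1 j) :=
      welfare_PU v w o 0 _
    have hPU0 : PU v w o 0 = PT v w o n := PU_zero v w o
    have hbon : ∑ j ∈ Fge n 0, (bon v w o j).val ((k (PU v w o 0)).1 j)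
        = TotM v w o := by
      rw [Fge_zero]
      rw [hPU0]
      exact sum_bon_of_superset v w o hy
    have hMJge : ∑ j ∈ Fge n 0, MJ v w o j = TotM v w o := by
      rw [Fge_zero]; rfl
    have hvv : welfare v o ≤ welfare v (k (PU v w o 0)) := by
      rw [hPU0]
      have h1 : ∑ j ∈ Flt n n, (v j).val (o.1 j) = welfare v o := by
        rw [Flt_top le_rfl]; rfl
      have h2 : ∑ j ∈ Flt n n, (v j).val ((k (PT v w o n)).1 j)
          = welfare v (k (PT v w o n)) := by
        rw [Flt_top le_rfl]; rfl
      rw [h1, h2] at hs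
      exact hs
    rw [hW, hbon, hMJge]
    linarith
  | succ c ih =>
    by_cases hc : c < n
    · set i : Fin n := (⟨c, hc⟩ : Fin n) with hidef
      have hup : PU v w o (c + 1) = Function.update (PU v w o c) i (v i) :=
        mixP_succ _ _ hc
      have hA' : welfare (PU v w o (c + 1)) (k (PU v w o (c + 1)))
          ≥ welfare (PU v w o (c + 1)) (k (PU v w o c)) := by
        have h0 := hA (PU v w o c) i (v i)
        rw [← hup] at h0
        exact h0
      have hPUi : PU v w o c i = addV (v i) (bon v w o i) := mixP_self _ _ hc
      have hdiff : ∀ x : CAAllocation S n,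
          welfare (PU v w o (c + 1)) x
            = welfare (PU v w o c) x - (bon v w o i).val (x.1 i) := by
        intro x
        rw [hup, welfare_update, hPUi]
        have hval : (addV (v i) (bon v w o i)).val (x.1 i)
            = (v i).val (x.1 i) + (bon v w o i).val (x.1 i) := rfl
        rw [hval]
        ring
      have hbonle : (bon v w o i).val ((k (PU v w o c)).1 i) ≤ MJ v w o i :=
        bon_le v w o i _
      have hMJsplit : ∑ j ∈ Fge n c, MJ v w o j
          = MJ v w o i + ∑ j ∈ Fge n (c + 1), MJ v w o j := by
        rw [Fge_eq_insert hc, Finset.sum_insert (not_mem_Fge_succ hc)]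
      have hold := hdiff (k (PU v w o c))
      linarith
    · have hstop : PU v w o (c + 1) = PU v w o c := mixP_succ_stop _ _ (le_of_not_gt hc)
      have hFge : Fge n (c + 1) = Fge n c := by
        rw [Fge_top (le_of_not_gt hc), Fge_top ((le_of_not_gt hc).trans (Nat.le_succ c))]
      rw [hstop, hFge]
      exact ih

/-- The key inequality: at any profile `w` in `Ṽ`, the allocation chosen at `w`
has no more `v`-welfare than the allocation chosen at `v`. -/
theorem key_main (k : (Fin n → CAValuation S) → CAAllocation S n)
    (hA : ∀ (P : Fin n → CAValuation S) (i : Fin n) (z : CAValuation S),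
      welfare (Function.update P i z) (k (Function.update P i z))
        ≥ welfare (Function.update P i z) (k P))
    (hB : ∀ (P : Fin n → CAValuation S) (i : Fin n) (z : CAValuation S),
      welfare P (k P) ≥ welfare P (k (Function.update P i z)))
    (hw : ∀ x y : CAAllocation S n, x ≠ y → welfare w x ≠ welfare w y) :
    welfare v (k w) ≤ welfare v (k v) := by
  have h3 := phase3 v w (k w) k hA hB hw rfl n
  have hPUn : PU v w (k w) n = v := mixP_top _ _ le_rfl
  have hFge : ∑ j ∈ Fge n n, MJ v w (k w) j = 0 := by
    rw [Fge_top le_rfl]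
    exact Finset.sum_empty
  rw [hPUn, hFge] at h3
  linarith

end Main

end Stmt4Aux

/-- Theorem 2: if a VCG-based mechanism for the combinatorial auction
problem is truthful, then its allocation algorithm is maximal in its range at `Ṽ`,
the set of profiles at which distinct allocations have distinct total welfare. -/
theorem stmt_4 {S : Type*} [DecidableEq S] [Fintype S] [Nonempty S]
    {n : ℕ} (hn : 0 < n)
    (k : (Fin n → CAValuation S) → CAAllocation S n)
    (p : Fin n → (Fin n → CAValuation S) → ℝ)
    (h : Fin n → (Fin n → CAValuation S) → ℝ)
    (hInd : ∀ (i : Fin n) (w w' : Fin n → CAValuation S),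
      (∀ j, j ≠ i → w j = w' j) → h i w = h i w')
    (hp : ∀ (i : Fin n) (w : Fin n → CAValuation S),
      p i w = (∑ j ∈ Finset.univ.erase i, (w j).val ((k w).1 j)) + h i w)
    (htruth : ∀ (i : Fin n) (v : CAValuation S) (w : Fin n → CAValuation S),
      v.val ((k (Function.update w i v)).1 i) + p i (Function.update w i v) ≥
        v.val ((k w).1 i) + p i w) :
    ∀ v : Fin n → CAValuation S,
      (∀ x y : CAAllocation S n, x ≠ y → welfare v x ≠ welfare v y) →
      IsGreatest
        {r : ℝ | ∃ w : Fin n → CAValuation S,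
          (∀ x y : CAAllocation S n, x ≠ y → welfare w x ≠ welfare w y) ∧
          r = welfare v (k w)}
        (welfare v (k v)) := by
  classical
  -- decomposition of welfare at coordinate i
  have hw1 : ∀ (i : Fin n) (Q : Fin n → CAValuation S) (x : CAAllocation S n),
      welfare Q x = (Q i).val (x.1 i) + ∑ j ∈ Finset.univ.erase i, (Q j).val (x.1 j) := by
    intro i Q x
    unfold welfare
    rw [← Finset.add_sum_erase _ (fun j => (Q j).val (x.1 j)) (Finset.mem_univ i)]
  -- inequality (A): truth-telling beats the old declaration, in welfare terms
  have hA : ∀ (P : Fin n → CAValuation S) (i : Fin n) (z : CAValuation S),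
      welfare (Function.update P i z) (k (Function.update P i z))
        ≥ welfare (Function.update P i z) (k P) := by
    intro P i z
    have ht := htruth i z P
    rw [hp i (Function.update P i z), hp i P] at ht
    have hh : h i (Function.update P i z) = h i P :=
      hInd i _ _ fun j hj => Function.update_of_ne hj _ _
    rw [hh] at ht
    have s1 : ∑ j ∈ Finset.univ.erase i,
          ((Function.update P i z) j).val ((k (Function.update P i z)).1 j)
        = ∑ j ∈ Finset.univ.erase i,
          (P j).val ((k (Function.update P i z)).1 j) :=
      Finset.sum_congr rfl fun j hj => by
        rw [Function.update_of_ne (Finset.ne_of_mem_erase hj)]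
    have s2 : ∑ j ∈ Finset.univ.erase i,
          ((Function.update P i z) j).val ((k P).1 j)
        = ∑ j ∈ Finset.univ.erase i, (P j).val ((k P).1 j) :=
      Finset.sum_congr rfl fun j hj => by
        rw [Function.update_of_ne (Finset.ne_of_mem_erase hj)]
    rw [hw1 i (Function.update P i z) (k (Function.update P i z)),
      hw1 i (Function.update P i z) (k P), Function.update_self, s1, s2]
    linarith
  -- inequality (B): the chosen allocation is at least as good as any deviation
  have hB : ∀ (P : Fin n → CAValuation S) (i : Fin n) (z : CAValuation S),
      welfare P (k P) ≥ welfare P (k (Function.update P i z)) := by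
    intro P i z
    have ht := htruth i (P i) (Function.update P i z)
    have hupd : Function.update (Function.update P i z) i (P i) = P := by
      rw [Function.update_idem, Function.update_eq_self]
    rw [hupd] at ht
    rw [hp i P, hp i (Function.update P i z)] at ht
    have hh : h i (Function.update P i z) = h i P :=
      hInd i _ _ fun j hj => Function.update_of_ne hj _ _
    rw [hh] at ht
    have s2 : ∑ j ∈ Finset.univ.erase i,
          ((Function.update P i z) j).val ((k (Function.update P i z)).1 j)
        = ∑ j ∈ Finset.univ.erase i,
          (P j).val ((k (Function.update P i z)).1 j) :=
      Finset.sum_congr rfl fun j hj => by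
        rw [Function.update_of_ne (Finset.ne_of_mem_erase hj)]
    rw [hw1 i P (k P), hw1 i P (k (Function.update P i z))]
    linarith
  intro v hv
  constructor
  · exact ⟨v, hv, rfl⟩
  · rintro r ⟨w, hw, rfl⟩
    exact Stmt4Aux.key_main v w k hA hB hw
end

section
/- If a VCG-based mechanism (k, p) for the combinatorial auction problem is truthful, then there exists an allocation algorithm k̂ that is maximal in its range at V (for every w ∈ V, g(w, k̂(w)) = max{ g(w, o) : o ∈ { k̂(w') : w' ∈ V } }) and satisfies g(v, k(v)) = g(v, k̂(v)) for every v ∈ V. -/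
set_option linter.unusedSectionVars false
set_option linter.unusedVariables false
set_option maxHeartbeats 1000000

namespace Stmt5Aux

variable {S : Type*} [DecidableEq S] [Fintype S] {n : ℕ}

lemma val_nonneg (v : CAValuation S) (s : Finset S) : 0 ≤ v.val s := by
  have h := v.mono ∅ s (Finset.empty_subset s)
  rwa [v.val_empty] at h

lemma val_le_univ (v : CAValuation S) (s : Finset S) : v.val s ≤ v.val Finset.univ :=
  v.mono s Finset.univ (Finset.subset_univ s)

/-- The "pinned boost" valuation: worth `v (s ∩ T)` plus a bonus `C` if `s ⊇ T ≠ ∅`. -/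
def pinBoost (v : CAValuation S) (T : Finset S) (C : ℝ) (hC : 0 ≤ C) : CAValuation S where
  val s := v.val (s ∩ T) + (if T ⊆ s ∧ T.Nonempty then C else 0)
  val_empty := by
    have hno : ¬(T ⊆ (∅ : Finset S) ∧ T.Nonempty) := by
      rintro ⟨h1, h2⟩
      exact h2.ne_empty (Finset.subset_empty.mp h1)
    simp [hno, v.val_empty]
  mono s t hst := by
    refine add_le_add (v.mono _ _ (Finset.inter_subset_inter hst le_rfl)) ?_
    by_cases hs : T ⊆ s ∧ T.Nonempty
    · rw [if_pos hs, if_pos ⟨hs.1.trans hst, hs.2⟩]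
    · rw [if_neg hs]
      split
      · exact hC
      · exact le_rfl

lemma pinBoost_le (v : CAValuation S) (T : Finset S) (C : ℝ) (hC : 0 ≤ C) (s : Finset S) :
    (pinBoost v T C hC).val s ≤ v.val Finset.univ + C := by
  refine add_le_add (val_le_univ v _) ?_
  split
  · exact le_rfl
  · exact hC

lemma pinBoost_of_not_subset (v : CAValuation S) (T : Finset S) (C : ℝ) (hC : 0 ≤ C)
    {s : Finset S} (hs : ¬ T ⊆ s) :
    (pinBoost v T C hC).val s ≤ v.val Finset.univ := by
  have : (if T ⊆ s ∧ T.Nonempty then C else 0) = 0 := by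
    rw [if_neg]; exact fun hc => hs hc.1
  simp only [pinBoost, this, add_zero]
  exact val_le_univ v _

lemma pinBoost_of_subset (v : CAValuation S) (T : Finset S) (C : ℝ) (hC : 0 ≤ C)
    {s : Finset S} (hs : T ⊆ s) :
    (pinBoost v T C hC).val s = v.val T + (if T.Nonempty then C else 0) := by
  have h1 : s ∩ T = T := Finset.inter_eq_right.mpr hs
  simp only [pinBoost, h1]
  by_cases hne : T.Nonempty
  · rw [if_pos ⟨hs, hne⟩, if_pos hne]
  · rw [if_neg (fun hc => hne hc.2), if_neg hne]

/-- Indicator valuation of a bundle `T`. -/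
def indVal (T : Finset S) : CAValuation S where
  val s := if T ⊆ s ∧ T.Nonempty then 1 else 0
  val_empty := by
    have hno : ¬(T ⊆ (∅ : Finset S) ∧ T.Nonempty) := by
      rintro ⟨h1, h2⟩
      exact h2.ne_empty (Finset.subset_empty.mp h1)
    simp [hno]
  mono s t hst := by
    by_cases hs : T ⊆ s ∧ T.Nonempty
    · rw [if_pos hs, if_pos ⟨hs.1.trans hst, hs.2⟩]
    · rw [if_neg hs]
      split
      · exact zero_le_one
      · exact le_rfl

/-- Welfare with an outcome-dependent boost `c`, bundles extracted via `β`. -/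
def Gc {m : ℕ} (β : Fin m → CAAllocation S n → Finset S) (c : CAAllocation S n → ℝ)
    (w : Fin m → CAValuation S) (x : CAAllocation S n) : ℝ :=
  (∑ j, (w j).val (β j x)) + c x

lemma Gc_nonneg {m : ℕ} (β : Fin m → CAAllocation S n → Finset S) {c : CAAllocation S n → ℝ}
    (hc0 : ∀ x, 0 ≤ c x) (w : Fin m → CAValuation S) (x : CAAllocation S n) :
    0 ≤ Gc β c w x :=
  add_nonneg (Finset.sum_nonneg fun j _ => val_nonneg _ _) (hc0 x)

lemma Gc_split {m : ℕ} (β : Fin (m + 1) → CAAllocation S n → Finset S)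
    (c : CAAllocation S n → ℝ) (w : Fin (m + 1) → CAValuation S) (x : CAAllocation S n) :
    Gc β c w x = (∑ i : Fin m, (w i.castSucc).val (β i.castSucc x))
      + ((w (Fin.last m)).val (β (Fin.last m) x) + c x) := by
  unfold Gc
  rw [Fin.sum_univ_castSucc]
  ring

lemma update_last_eq_snoc {m : ℕ} (v : Fin (m + 1) → CAValuation S) (A : CAValuation S) :
    Function.update v (Fin.last m) A = Fin.snoc (Fin.init v) A := by
  funext j
  refine Fin.lastCases ?_ ?_ j
  · simp [Fin.snoc_last]
  · intro i
    rw [Function.update_of_ne (Fin.ne_of_lt (Fin.castSucc_lt_last i))]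
    simp [Fin.snoc_castSucc, Fin.init]


lemma snoc_update' {m : ℕ} (z : Fin m → CAValuation S) (A : CAValuation S) (i : Fin m)
    (q : CAValuation S) :
    (Fin.snoc (Function.update z i q) A : Fin (m + 1) → CAValuation S)
      = Function.update (Fin.snoc z A) i.castSucc q :=
  Fin.snoc_update (α := fun _ : Fin (m + 1) => CAValuation S) A z i q

theorem GT : ∀ (m : ℕ) (β : Fin m → CAAllocation S n → Finset S)
    (c : CAAllocation S n → ℝ) (Mc : ℝ)
    (hc0 : ∀ x, 0 ≤ c x) (hcM : ∀ x, c x ≤ Mc)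
    (K : (Fin m → CAValuation S) → CAAllocation S n)
    (hP : ∀ (z : Fin m → CAValuation S) (i : Fin m) (q : CAValuation S),
      Gc β c (Function.update z i q) (K (Function.update z i q)) ≥
        Gc β c (Function.update z i q) (K z))
    (v : Fin m → CAValuation S),
    ∃ (U : Fin m → Finset S) (b : CAAllocation S n),
      (∀ w, Gc β c w (K w) ≥ (∑ j, (w j).val (U j)) + c b) ∧
      Gc β c v (K v) = (∑ j, (v j).val (U j)) + c b := by
  intro m
  induction m with
  | zero =>
    intro β c Mc hc0 hcM K hP v
    refine ⟨fun i => i.elim0, K v, ?_, ?_⟩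
    · intro w
      have hw : w = v := funext fun i => i.elim0
      subst hw
      simp [Gc]
    · simp [Gc]
  | succ m IH =>
    intro β c Mc hc0 hcM K hP v
    -- notation
    set lst : Fin (m + 1) := Fin.last m with hlst
    set T : Finset S := β lst (K v) with hTdef
    set ML : ℝ := (v lst).val Finset.univ with hML
    set Mv : ℝ := ∑ j, (v j).val Finset.univ with hMv
    have hMLnn : 0 ≤ ML := val_nonneg _ _
    have hMvnn : 0 ≤ Mv := Finset.sum_nonneg fun j _ => val_nonneg _ _
    -- the boosted valuation for the last agent, parametrized by C : ℕ
    have hCnn : ∀ C : ℕ, (0 : ℝ) ≤ (C : ℝ) := fun C => Nat.cast_nonneg C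
    set A : ℕ → CAValuation S := fun C => pinBoost (v lst) T (C : ℝ) (hCnn C) with hA
    -- the sub-mechanism data
    set β' : Fin m → CAAllocation S n → Finset S := fun i => β i.castSucc with hβ'
    set c' : ℕ → CAAllocation S n → ℝ := fun C x => c x + (A C).val (β lst x) with hc'
    set K' : ℕ → (Fin m → CAValuation S) → CAAllocation S n :=
      fun C z => K (Fin.snoc z (A C)) with hK'
    -- relation between the sub-welfare and the full welfare
    have hGrel : ∀ (C : ℕ) (z : Fin m → CAValuation S) (x : CAAllocation S n),
        Gc β' (c' C) z x = Gc β c (Fin.snoc z (A C)) x := by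
      intro C z x
      rw [Gc_split β c (Fin.snoc z (A C)) x]
      simp only [Gc, hβ', hc', Fin.snoc_castSucc, Fin.snoc_last]
      ring
    have hc0' : ∀ C x, 0 ≤ c' C x := fun C x => add_nonneg (hc0 x) (val_nonneg _ _)
    have hcM' : ∀ C x, c' C x ≤ Mc + (ML + (C : ℝ)) := by
      intro C x
      refine add_le_add (hcM x) ?_
      exact pinBoost_le _ _ _ _ _
    have hP' : ∀ (C : ℕ) (z : Fin m → CAValuation S) (i : Fin m) (q : CAValuation S),
        Gc β' (c' C) (Function.update z i q) (K' C (Function.update z i q)) ≥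
          Gc β' (c' C) (Function.update z i q) (K' C z) := by
      intro C z i q
      simp only [hGrel, hK']
      rw [snoc_update' z (A C) i q]
      exact hP (Fin.snoc z (A C)) i.castSucc q
    -- apply the induction hypothesis, for every C
    have hIH : ∀ C : ℕ, ∃ (U' : Fin m → Finset S) (b' : CAAllocation S n),
        (∀ w, Gc β' (c' C) w (K' C w) ≥ (∑ j, (w j).val (U' j)) + c' C b') ∧
        Gc β' (c' C) (Fin.init v) (K' C (Fin.init v))
          = (∑ j, ((Fin.init v) j).val (U' j)) + c' C b' := by
      intro C
      exact IH β' (c' C) (Mc + (ML + (C : ℝ))) (hc0' C) (hcM' C) (K' C) (hP' C) (Fin.init v)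
    choose U' b' dom' eq' using hIH
    -- pigeonhole: one witness pair for arbitrarily large C
    have hpig : ∃ (U₀ : Fin m → Finset S) (b₀ : CAAllocation S n),
        ∀ N : ℕ, ∃ C, N ≤ C ∧ U' C = U₀ ∧ b' C = b₀ := by
      obtain ⟨p, hp⟩ := Finite.exists_infinite_fiber (fun C => (U' C, b' C))
      refine ⟨p.1, p.2, fun N => ?_⟩
      have h2 : ((fun C => (U' C, b' C)) ⁻¹' {p}).Infinite := Set.infinite_coe_iff.mp hp
      obtain ⟨C, hC1, hC2⟩ := h2.exists_gt N
      have hC1' : (U' C, b' C) = p := hC1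
      exact ⟨C, le_of_lt hC2, by rw [← hC1'], by rw [← hC1']⟩
    obtain ⟨U₀, b₀, hfib⟩ := hpig
    -- the combined bundle family
    set U : Fin (m + 1) → Finset S := Fin.snoc U₀ T with hU
    have hsumU : ∀ w : Fin (m + 1) → CAValuation S,
        (∑ j, (w j).val (U j))
          = (∑ i : Fin m, (w i.castSucc).val (U₀ i)) + (w lst).val T := by
      intro w
      rw [Fin.sum_univ_castSucc]
      simp only [hU, Fin.snoc_castSucc, Fin.snoc_last, hlst]
    -- φv
    set φv : ℝ := Gc β c v (K v) with hφv
    have hφvnn : 0 ≤ φv := Gc_nonneg β hc0 v (K v)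
    -- the key inequality E C, for C in the fiber
    have hE : ∀ C : ℕ, U' C = U₀ → b' C = b₀ →
        (∑ i : Fin m, (v i.castSucc).val (U₀ i)) + c' C b₀
          ≥ φv + (if T.Nonempty then (C : ℝ) else 0) := by
      intro C hU'C hb'C
      have hupd : Function.update v lst (A C) = Fin.snoc (Fin.init v) (A C) :=
        update_last_eq_snoc v (A C)
      have step1 : Gc β c (Function.update v lst (A C)) (K v)
          = φv + (if T.Nonempty then (C : ℝ) else 0) := by
        rw [hupd, Gc_split β c _ (K v), hφv, Gc_split β c v (K v)]
        have h1 : ∀ i : Fin m, ((Fin.snoc (Fin.init v) (A C) : Fin (m+1) → CAValuation S)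
            i.castSucc) = v i.castSucc := by
          intro i; rw [Fin.snoc_castSucc]; rfl
        have h2 : ((Fin.snoc (Fin.init v) (A C) : Fin (m+1) → CAValuation S) lst) = A C := by
          rw [hlst, Fin.snoc_last]
        rw [Finset.sum_congr rfl (fun i _ => by rw [h1 i]), h2]
        have h3 : (A C).val (β lst (K v)) = (v lst).val T + (if T.Nonempty then (C : ℝ) else 0) := by
          rw [hA, ← hTdef]
          exact pinBoost_of_subset _ _ _ _ le_rfl
        rw [h3]
        ring
      have step2 := hP v lst (A C)
      rw [step1] at step2
      have hKeq : K' C (Fin.init v) = K (Function.update v lst (A C)) := by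
        simp only [hK']
        rw [hupd]
      have step3 : Gc β c (Function.update v lst (A C)) (K (Function.update v lst (A C)))
          = Gc β' (c' C) (Fin.init v) (K' C (Fin.init v)) := by
        simp only [hGrel]
        rw [hKeq, ← hupd]
      rw [step3] at step2
      rw [eq' C, hU'C, hb'C] at step2
      exact step2
    -- b₀'s last bundle contains T
    have hsatb : T ⊆ β lst b₀ := by
      by_cases hne : T.Nonempty
      · by_contra hnot
        obtain ⟨N, hN⟩ := exists_nat_gt (Mv + Mc + ML)
        obtain ⟨C, hNC, hU'C, hb'C⟩ := hfib N
        have hCbig : Mv + Mc + ML < (C : ℝ) := lt_of_lt_of_le hN (Nat.cast_le.mpr hNC)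
        have hEC := hE C hU'C hb'C
        rw [if_pos hne] at hEC
        have hub1 : (∑ i : Fin m, (v i.castSucc).val (U₀ i)) ≤ Mv := by
          rw [hMv, Fin.sum_univ_castSucc]
          have := val_nonneg (v lst) (Finset.univ : Finset S)
          have hle : (∑ i : Fin m, (v i.castSucc).val (U₀ i))
              ≤ ∑ i : Fin m, (v i.castSucc).val Finset.univ :=
            Finset.sum_le_sum fun i _ => val_le_univ _ _
          rw [hlst] at *
          linarith
        have hub2 : c' C b₀ ≤ Mc + ML := by
          rw [hc']
          refine add_le_add (hcM b₀) ?_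
          rw [hA]
          exact pinBoost_of_not_subset _ _ _ _ hnot
        linarith
      · rw [Finset.not_nonempty_iff_eq_empty] at hne
        rw [hne]
        exact Finset.empty_subset _
    have hpin : ∀ C : ℕ, (A C).val (β lst b₀)
        = (v lst).val T + (if T.Nonempty then (C : ℝ) else 0) := by
      intro C
      rw [hA]
      exact pinBoost_of_subset _ _ _ _ hsatb
    -- DOMINANCE
    have hDOM : ∀ w : Fin (m + 1) → CAValuation S,
        Gc β c w (K w) ≥ (∑ j, (w j).val (U j)) + c b₀ := by
      intro w
      obtain ⟨N, hN⟩ := exists_nat_gt ((∑ i : Fin m, (w i.castSucc).val Finset.univ) + Mc + ML)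
      obtain ⟨C, hNC, hU'C, hb'C⟩ := hfib N
      have hCbig : (∑ i : Fin m, (w i.castSucc).val Finset.univ) + Mc + ML < (C : ℝ) :=
        lt_of_lt_of_le hN (Nat.cast_le.mpr hNC)
      have hupd : Function.update w lst (A C) = Fin.snoc (Fin.init w) (A C) :=
        update_last_eq_snoc w (A C)
      set y : CAAllocation S n := K (Function.update w lst (A C)) with hy
      have hyK' : K' C (Fin.init w) = y := by
        simp only [hK']
        rw [← hupd]
      -- sub-dominance at (init w)
      have hdom := dom' C (Fin.init w)
      rw [hU'C, hb'C, hyK'] at hdom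
      have hGc'y : Gc β' (c' C) (Fin.init w) y
          = (∑ i : Fin m, (w i.castSucc).val (β i.castSucc y)) + (c y + (A C).val (β lst y)) := by
        simp only [Gc, hβ', hc']
        have : ∀ i : Fin m, ((Fin.init w) i) = w i.castSucc := fun i => rfl
        rw [Finset.sum_congr rfl (fun i _ => by rw [this i])]
      -- the allocation y gives the last agent a superset of T
      have hsaty : T ⊆ β lst y := by
        by_cases hne : T.Nonempty
        · by_contra hnot
          have hub : Gc β' (c' C) (Fin.init w) y
              ≤ (∑ i : Fin m, (w i.castSucc).val Finset.univ) + Mc + ML := by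
            rw [hGc'y]
            have h1 : (∑ i : Fin m, (w i.castSucc).val (β i.castSucc y))
                ≤ ∑ i : Fin m, (w i.castSucc).val Finset.univ :=
              Finset.sum_le_sum fun i _ => val_le_univ _ _
            have h2 : (A C).val (β lst y) ≤ ML := by
              rw [hA]
              exact pinBoost_of_not_subset _ _ _ _ hnot
            have h3 := hcM y
            linarith
          have hlb : Gc β' (c' C) (Fin.init w) y
              ≥ (∑ j, ((Fin.init w) j).val (U₀ j)) + c' C b₀ := hdom
          have h4 : c' C b₀ ≥ (C : ℝ) := by
            show c b₀ + (A C).val (β lst b₀) ≥ (C : ℝ)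
            rw [hpin C, if_pos hne]
            have := hc0 b₀
            have := val_nonneg (v lst) T
            linarith
          have h5 : (∑ j, ((Fin.init w) j).val (U₀ j)) ≥ 0 :=
            Finset.sum_nonneg fun j _ => val_nonneg _ _
          linarith
        · rw [Finset.not_nonempty_iff_eq_empty] at hne
          rw [hne]
          exact Finset.empty_subset _
      have hpiny : (A C).val (β lst y)
          = (v lst).val T + (if T.Nonempty then (C : ℝ) else 0) := by
        rw [hA]
        exact pinBoost_of_subset _ _ _ _ hsaty
      -- key: the w-portion of y's welfare dominates
      have hkey : (∑ i : Fin m, (w i.castSucc).val (β i.castSucc y)) + c y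
          ≥ (∑ i : Fin m, (w i.castSucc).val (U₀ i)) + c b₀ := by
        have h6 : c' C b₀ = c b₀ + ((v lst).val T + (if T.Nonempty then (C : ℝ) else 0)) := by
          show c b₀ + (A C).val (β lst b₀) = _
          rw [hpin C]
        have h7 : (∑ j, ((Fin.init w) j).val (U₀ j))
            = ∑ i : Fin m, (w i.castSucc).val (U₀ i) := rfl
        rw [hGc'y, h6, h7, hpiny] at hdom
        linarith
      -- final step down to w
      have hstep := hP (Function.update w lst (A C)) lst (w lst)
      rw [Function.update_idem, Function.update_eq_self] at hstep
      have hfin : Gc β c w y ≥ (∑ j, (w j).val (U j)) + c b₀ := by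
        rw [Gc_split β c w y, hsumU w]
        have h8 : (w lst).val (β lst y) ≥ (w lst).val T := (w lst).mono _ _ hsaty
        rw [hlst] at *
        linarith
      calc Gc β c w (K w) ≥ Gc β c w (K (Function.update w lst (A C))) := hstep
        _ = Gc β c w y := by rw [hy]
        _ ≥ (∑ j, (w j).val (U j)) + c b₀ := hfin
    -- EQUALITY at v
    have hEQ : Gc β c v (K v) = (∑ j, (v j).val (U j)) + c b₀ := by
      refine le_antisymm ?_ (hDOM v)
      obtain ⟨C, hNC, hU'C, hb'C⟩ := hfib 0
      have hEC := hE C hU'C hb'C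
      have h6 : c' C b₀ = c b₀ + ((v lst).val T + (if T.Nonempty then (C : ℝ) else 0)) := by
        show c b₀ + (A C).val (β lst b₀) = _
        rw [hpin C]
      rw [h6] at hEC
      rw [hsumU v]
      rw [hφv] at hEC
      linarith
    exact ⟨U, b₀, hDOM, hEQ⟩

end Stmt5Aux

/-- Corollary 1: if a VCG-based mechanism for the combinatorial auction
problem is truthful, then there is an allocation algorithm `k̂` that is maximal in its
range at `V` and yields the same welfare as `k` at every profile. -/
theorem stmt_5 {S : Type*} [DecidableEq S] [Fintype S] [Nonempty S]
    {n : ℕ} (hn : 0 < n)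
    (k : (Fin n → CAValuation S) → CAAllocation S n)
    (p : Fin n → (Fin n → CAValuation S) → ℝ)
    (h : Fin n → (Fin n → CAValuation S) → ℝ)
    (hInd : ∀ (i : Fin n) (w w' : Fin n → CAValuation S),
      (∀ j, j ≠ i → w j = w' j) → h i w = h i w')
    (hp : ∀ (i : Fin n) (w : Fin n → CAValuation S),
      p i w = (∑ j ∈ Finset.univ.erase i, (w j).val ((k w).1 j)) + h i w)
    (htruth : ∀ (i : Fin n) (v : CAValuation S) (w : Fin n → CAValuation S),
      v.val ((k (Function.update w i v)).1 i) + p i (Function.update w i v) ≥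
        v.val ((k w).1 i) + p i w) :
    ∃ khat : (Fin n → CAValuation S) → CAAllocation S n,
      (∀ w : Fin n → CAValuation S,
        IsGreatest {r : ℝ | ∃ w' : Fin n → CAValuation S, r = welfare w (khat w')}
          (welfare w (khat w))) ∧
      ∀ v : Fin n → CAValuation S, welfare v (k v) = welfare v (khat v) := by
  classical
  -- Step 1: truthfulness of the VCG-based mechanism gives the one-step welfare property.
  have hP0 : ∀ (z : Fin n → CAValuation S) (i : Fin n) (q : CAValuation S),
      welfare (Function.update z i q) (k (Function.update z i q)) ≥
        welfare (Function.update z i q) (k z) := by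
    intro z i q
    have ht := htruth i q z
    rw [hp i (Function.update z i q), hp i z] at ht
    have hh : h i (Function.update z i q) = h i z :=
      hInd i (Function.update z i q) z (fun j hj => Function.update_of_ne hj q z)
    have hsplit : ∀ (w : Fin n → CAValuation S) (x : CAAllocation S n),
        welfare w x = (w i).val (x.1 i) + ∑ j ∈ Finset.univ.erase i, (w j).val (x.1 j) := by
      intro w x
      rw [welfare]
      exact (Finset.add_sum_erase Finset.univ (fun j => (w j).val (x.1 j))
        (Finset.mem_univ i)).symm
    have herase : ∀ x : CAAllocation S n,
        (∑ j ∈ Finset.univ.erase i, ((Function.update z i q) j).val (x.1 j))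
          = ∑ j ∈ Finset.univ.erase i, (z j).val (x.1 j) := by
      intro x
      refine Finset.sum_congr rfl fun j hj => ?_
      rw [Function.update_of_ne (Finset.ne_of_mem_erase hj) q z]
    rw [hsplit (Function.update z i q) (k (Function.update z i q)),
        hsplit (Function.update z i q) (k z), Function.update_self, herase, herase]
    rw [hh, herase (k (Function.update z i q))] at ht
    linarith
  -- Step 2: translate to the `Gc` setting and apply the main induction.
  have hGc : ∀ (w : Fin n → CAValuation S) (x : CAAllocation S n),
      Stmt5Aux.Gc (fun i (x : CAAllocation S n) => x.1 i) (fun _ => (0 : ℝ)) w x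
        = welfare w x := by
    intro w x
    simp [Stmt5Aux.Gc, welfare]
  have hGT := Stmt5Aux.GT (S := S) (n := n) n (fun i (x : CAAllocation S n) => x.1 i)
      (fun _ => (0 : ℝ)) 0 (fun _ => le_rfl) (fun _ => le_rfl) k
      (by intro z i q; rw [hGc, hGc]; exact hP0 z i q)
  choose U b hdom heq using hGT
  have hdom' : ∀ (v w : Fin n → CAValuation S),
      welfare w (k w) ≥ ∑ j, (w j).val (U v j) := by
    intro v w
    have h1 := hdom v w
    rw [hGc] at h1
    simpa using h1
  have heq' : ∀ v : Fin n → CAValuation S,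
      welfare v (k v) = ∑ j, (v j).val (U v j) := by
    intro v
    have h1 := heq v
    rw [hGc] at h1
    simpa using h1
  -- Step 3: dominance forces the bundles `U v` to be pairwise disjoint.
  have hdisj : ∀ (v : Fin n → CAValuation S) (i j : Fin n), i ≠ j →
      Disjoint (U v i) (U v j) := by
    intro v i j hij
    set z : Fin n → CAValuation S := fun l => Stmt5Aux.indVal (U v l) with hz
    have hsub : ∀ l : Fin n, (U v l).Nonempty → (U v l) ⊆ (k z).1 l := by
      intro l hne
      have hd := hdom' v z
      have hlhs : welfare z (k z)
          = ∑ l, (if (U v l) ⊆ (k z).1 l ∧ (U v l).Nonempty then (1 : ℝ) else 0) :=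
        Finset.sum_congr rfl fun l _ => rfl
      have hrhs : (∑ l, (z l).val (U v l))
          = ∑ l, (if (U v l).Nonempty then (1 : ℝ) else 0) := by
        refine Finset.sum_congr rfl fun l _ => ?_
        show (if (U v l) ⊆ (U v l) ∧ (U v l).Nonempty then (1 : ℝ) else 0) = _
        by_cases hne' : (U v l).Nonempty
        · rw [if_pos ⟨le_rfl, hne'⟩, if_pos hne']
        · rw [if_neg (fun hc => hne' hc.2), if_neg hne']
      rw [hlhs, hrhs] at hd
      have hpw : ∀ l ∈ Finset.univ,
          (if (U v l) ⊆ (k z).1 l ∧ (U v l).Nonempty then (1 : ℝ) else 0)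
            ≤ (if (U v l).Nonempty then (1 : ℝ) else 0) := by
        intro l _
        by_cases hc : (U v l) ⊆ (k z).1 l ∧ (U v l).Nonempty
        · rw [if_pos hc, if_pos hc.2]
        · rw [if_neg hc]
          split
          · exact zero_le_one
          · exact le_rfl
      have hsums := le_antisymm (Finset.sum_le_sum hpw) hd
      have halleq := (Finset.sum_eq_sum_iff_of_le hpw).mp hsums l (Finset.mem_univ l)
      rw [if_pos hne] at halleq
      by_contra hnsub
      rw [if_neg (fun hc => hnsub hc.1)] at halleq
      norm_num at halleq
    by_cases hi : (U v i).Nonempty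
    · by_cases hj : (U v j).Nonempty
      · exact Finset.disjoint_of_subset_left (hsub i hi)
          (Finset.disjoint_of_subset_right (hsub j hj) ((k z).2 i j hij))
      · rw [Finset.not_nonempty_iff_eq_empty] at hj
        rw [hj]
        exact Finset.disjoint_empty_right _
    · rw [Finset.not_nonempty_iff_eq_empty] at hi
      rw [hi]
      exact Finset.disjoint_empty_left _
  -- Step 4: assemble `khat`.
  refine ⟨fun v => ⟨U v, hdisj v⟩, ?_, ?_⟩
  · intro w
    constructor
    · exact ⟨w, rfl⟩
    · rintro r ⟨w', rfl⟩
      show welfare w ⟨U w', hdisj w'⟩ ≤ welfare w ⟨U w, hdisj w⟩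
      calc welfare w ⟨U w', hdisj w'⟩ = ∑ j, (w j).val (U w' j) := rfl
        _ ≤ welfare w (k w) := hdom' w' w
        _ = ∑ j, (w j).val (U w j) := heq' w
        _ = welfare w ⟨U w, hdisj w⟩ := rfl
  · intro v
    rw [heq' v]
    rfl
end

section
/- Every truthful VCG-based mechanism (k, p) for the combinatorial auction problem whose allocation algorithm is not optimal (i.e., there exists v ∈ V with g(v, k(v)) < g_opt(v)) is not reasonable: there exist a valuation profile v, an item j, and an agent i such that v^i(s ∪ {j}) > v^i(s) for every set s with j ∉ s, and v^l(s ∪ {j}) = v^l(s) for every agent l ≠ i and every set s, yet j ∉ k(v)^i. -/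
/-- Auxiliary: the perturbed valuation caring only about items in `a`. -/
def CATweak {S : Type*} [DecidableEq S] (u : CAValuation S) (a : Finset S) (ε : ℝ)
    (hε : 0 ≤ ε) : CAValuation S where
  val s := u.val (s ∩ a) + ε * ((s ∩ a).card : ℝ)
  val_empty := by simp [u.val_empty]
  mono s t hst := by
    have h1 : s ∩ a ⊆ t ∩ a := Finset.inter_subset_inter hst (le_refl _)
    have h2 := u.mono _ _ h1
    have h3 : ((s ∩ a).card : ℝ) ≤ ((t ∩ a).card : ℝ) := by
      exact_mod_cast Finset.card_le_card h1
    nlinarith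

/-- Theorem 3: every truthful VCG-based mechanism for combinatorial
auctions whose allocation algorithm is not optimal is not reasonable: there are a
profile `v`, an item `j` and an agent `i` such that `i` is the only agent desiring `j`
(adding `j` strictly increases `i`'s value and leaves every other agent's value
unchanged), yet `j` is not allocated to `i`. -/
theorem stmt_6 {S : Type*} [DecidableEq S] [Fintype S] [Nonempty S]
    {n : ℕ} (hn : 0 < n)
    (k : (Fin n → CAValuation S) → CAAllocation S n)
    (p : Fin n → (Fin n → CAValuation S) → ℝ)
    (h : Fin n → (Fin n → CAValuation S) → ℝ)
    (hInd : ∀ (i : Fin n) (w w' : Fin n → CAValuation S),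
      (∀ j, j ≠ i → w j = w' j) → h i w = h i w')
    (hp : ∀ (i : Fin n) (w : Fin n → CAValuation S),
      p i w = (∑ j ∈ Finset.univ.erase i, (w j).val ((k w).1 j)) + h i w)
    (htruth : ∀ (i : Fin n) (v : CAValuation S) (w : Fin n → CAValuation S),
      v.val ((k (Function.update w i v)).1 i) + p i (Function.update w i v) ≥
        v.val ((k w).1 i) + p i w)
    (hsubopt : ∃ (v : Fin n → CAValuation S) (x : CAAllocation S n),
      welfare v (k v) < welfare v x) :
    ∃ (v : Fin n → CAValuation S) (j : S) (i : Fin n),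
      (∀ s : Finset S, j ∉ s → (v i).val (insert j s) > (v i).val s) ∧
      (∀ l : Fin n, l ≠ i → ∀ s : Finset S, (v l).val (insert j s) = (v l).val s) ∧
      j ∉ (k v).1 i := by
  by_contra hcon
  push_neg at hcon
  obtain ⟨v, x, hvx⟩ := hsubopt
  set C : ℝ := (Fintype.card S : ℝ) with hCdef
  have hC1 : (1 : ℝ) ≤ C := by
    have h1 : 1 ≤ Fintype.card S := Fintype.card_pos
    rw [hCdef]
    exact_mod_cast h1
  set δ : ℝ := welfare v x - welfare v (k v) with hδdef
  have hδ : 0 < δ := by simp [hδdef]; linarith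
  have hden : (0 : ℝ) < n * C + 1 := by positivity
  set ε : ℝ := δ / (n * C + 1) with hεdef
  have hε : 0 < ε := div_pos hδ hden
  set v' : Fin n → CAValuation S := fun i => CATweak (v i) (x.1 i) ε hε.le with hv'
  -- value bound
  have hb : ∀ (i : Fin n) (s : Finset S), (v' i).val s ≤ (v i).val s + ε * C := by
    intro i s
    have h1 : (v i).val (s ∩ x.1 i) ≤ (v i).val s :=
      (v i).mono _ _ Finset.inter_subset_left
    have h2 : ((s ∩ x.1 i).card : ℝ) ≤ C := by
      rw [hCdef]
      exact_mod_cast Finset.card_le_univ _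
    show (v i).val (s ∩ x.1 i) + ε * ((s ∩ x.1 i).card : ℝ) ≤ _
    nlinarith
  -- the key single-step lemma from truthfulness
  have hstep : ∀ (w : Fin n → CAValuation S) (i : Fin n), w i = v i →
      welfare (Function.update w i (v' i)) (k (Function.update w i (v' i)))
        ≤ welfare w (k w) + ε * C := by
    intro w i hwi
    set w' := Function.update w i (v' i) with hw'def
    have hupd : Function.update w' i (w i) = w := by
      rw [hw'def, Function.update_idem, Function.update_eq_self]
    have ht := htruth i (w i) w'
    rw [hupd] at ht
    have hh : h i w = h i w' :=
      hInd i w w' (fun j hj => (Function.update_of_ne hj _ _).symm)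
    rw [hp i w, hp i w'] at ht
    have hsumeq : ∀ y : CAAllocation S n,
        (∑ j ∈ Finset.univ.erase i, (w' j).val (y.1 j))
          = ∑ j ∈ Finset.univ.erase i, (w j).val (y.1 j) := by
      intro y
      refine Finset.sum_congr rfl fun j hj => ?_
      rw [hw'def, Function.update_of_ne (Finset.ne_of_mem_erase hj)]
    have hsplit : ∀ (u : Fin n → CAValuation S) (y : CAAllocation S n),
        welfare u y = (u i).val (y.1 i) + ∑ j ∈ Finset.univ.erase i, (u j).val (y.1 j) := by
      intro u y
      rw [welfare]
      exact (Finset.add_sum_erase _ _ (Finset.mem_univ i)).symm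
    have h1 : welfare w (k w) ≥ welfare w (k w') := by
      rw [hsplit w (k w), hsplit w (k w')]
      rw [hsumeq (k w')] at ht
      linarith
    have h2 : welfare w' (k w') = welfare w (k w') - (w i).val ((k w').1 i)
        + (v' i).val ((k w').1 i) := by
      rw [hsplit w' (k w'), hsplit w (k w'), hsumeq (k w')]
      have : w' i = v' i := Function.update_self _ _ _
      rw [this]; ring
    have h3 := hb i ((k w').1 i)
    rw [hwi] at h2
    linarith
  -- hybrid profiles
  set W : ℕ → Fin n → CAValuation S := fun m i => if (i : ℕ) < m then v' i else v i with hWdef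
  have hW0 : W 0 = v := funext fun i => if_neg (by omega)
  have hWn : W n = v' := funext fun i => if_pos i.isLt
  have hyb : ∀ m, m ≤ n → welfare (W m) (k (W m)) ≤ welfare v (k v) + m * (ε * C) := by
    intro m
    induction m with
    | zero => intro _; rw [hW0]; simp
    | succ m ih =>
      intro hm
      have hmn : m < n := hm
      set i : Fin n := ⟨m, hmn⟩ with hidef
      have hWi : W m i = v i := if_neg (by simp [hidef])
      have hup : W (m + 1) = Function.update (W m) i (v' i) := by
        funext j
        rcases eq_or_ne j i with rfl | hne
        · rw [Function.update_self]
          exact if_pos (Nat.lt_succ_self m)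
        · rw [Function.update_of_ne hne]
          have hjm : (j : ℕ) ≠ m := fun hh => hne (Fin.ext hh)
          show (if (j : ℕ) < m + 1 then v' j else v j) = (if (j : ℕ) < m then v' j else v j)
          by_cases hlt : (j : ℕ) < m
          · rw [if_pos (by omega), if_pos hlt]
          · rw [if_neg (by omega), if_neg hlt]
      have hst := hstep (W m) i hWi
      rw [hup]
      have hih := ih (le_of_lt hmn)
      push_cast
      linarith
  have hfinal : welfare v' (k v') ≤ welfare v (k v) + n * (ε * C) := by
    have := hyb n le_rfl
    rw [hWn] at this
    exact this
  -- reasonableness forces x ⊆ k v'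
  have hsub : ∀ i : Fin n, x.1 i ⊆ (k v').1 i := by
    intro i j hj
    refine hcon v' j i ?_ ?_
    · intro s hs
      have h1 : insert j s ∩ x.1 i = insert j (s ∩ x.1 i) := Finset.insert_inter_of_mem hj
      have hjn : j ∉ s ∩ x.1 i := fun hmem => hs (Finset.mem_of_mem_inter_left hmem)
      show (v i).val (insert j s ∩ x.1 i) + ε * ((insert j s ∩ x.1 i).card : ℝ)
        > (v i).val (s ∩ x.1 i) + ε * ((s ∩ x.1 i).card : ℝ)
      rw [h1]
      have h2 : (v i).val (s ∩ x.1 i) ≤ (v i).val (insert j (s ∩ x.1 i)) :=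
        (v i).mono _ _ (Finset.subset_insert _ _)
      have h3 : ((insert j (s ∩ x.1 i)).card : ℝ) = ((s ∩ x.1 i).card : ℝ) + 1 := by
        rw [Finset.card_insert_of_notMem hjn]; push_cast; ring
      rw [h3]; nlinarith
    · intro l hl s
      have hjl : j ∉ x.1 l := by
        have hd := x.2 l i hl
        exact fun hmem => (Finset.disjoint_left.mp hd hmem) hj
      show (v l).val (insert j s ∩ x.1 l) + ε * ((insert j s ∩ x.1 l).card : ℝ)
        = (v l).val (s ∩ x.1 l) + ε * ((s ∩ x.1 l).card : ℝ)
      rw [Finset.insert_inter_of_notMem hjl]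
  have hge : welfare v x ≤ welfare v' (k v') := by
    rw [welfare, welfare]
    refine Finset.sum_le_sum fun i _ => ?_
    have h1 : (v i).val (x.1 i) ≤ (v' i).val (x.1 i) := by
      show (v i).val (x.1 i) ≤ (v i).val (x.1 i ∩ x.1 i) + ε * ((x.1 i ∩ x.1 i).card : ℝ)
      rw [Finset.inter_self]
      nlinarith [Nat.cast_nonneg (α := ℝ) (x.1 i).card]
    exact h1.trans ((v' i).mono _ _ (hsub i))
  -- final contradiction
  have hεδ : ε * (n * C + 1) = δ := div_mul_cancel₀ δ (ne_of_gt hden)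
  have hnC : (0 : ℝ) ≤ n * C := by positivity
  nlinarith
end

section
/- Let a CMAP satisfy the forcing condition and let (k, p) be a truthful VCG-based mechanism for it. Then k is either optimal (g(v, k(v)) = g_opt(v) for every v ∈ V) or degenerate (for every M there exists v ∈ V with (g_opt(v) − g(v, k(v)))/(|g_opt(v)| + 1) > M). -/
/-- The total welfare of output `x` at type profile `v` in a CMAP, where `u i vᵢ xᵢ` is
agent `i`'s valuation of its part `xᵢ` of the output at type `vᵢ`. -/
def cmapWelfare {n : ℕ} {m : Fin n → ℕ}
    (u : ∀ i, (Fin (m i) → ℝ) → (Fin (m i) → Bool) → ℝ)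
    (v : ∀ i, Fin (m i) → ℝ) (x : ∀ i, Fin (m i) → Bool) : ℝ :=
  ∑ i, u i (v i) (x i)

/-- The profile `v[α]` (relative to output `x`): keep `vᵢⱼ` on coordinates with
`xᵢⱼ = 1` and replace all other coordinates by `α`. -/
def cmapForce {n : ℕ} {m : Fin n → ℕ}
    (v : ∀ i, Fin (m i) → ℝ) (x : ∀ i, Fin (m i) → Bool) (α : ℝ) :
    ∀ i, Fin (m i) → ℝ :=
  fun i j => if x i j then v i j else α

/-- Auxiliary hybrid profile: replace the coordinates of the first `t` agents that are
outside the support of `y` by `α`, keeping everything else equal to `v`. -/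
def cmapMask {n : ℕ} {m : Fin n → ℕ}
    (v : ∀ i, Fin (m i) → ℝ) (y : ∀ i, Fin (m i) → Bool) (t : ℕ) (α : ℝ) :
    ∀ i, Fin (m i) → ℝ :=
  fun i j => if (i : ℕ) < t ∧ y i j = false then α else v i j

/-- Theorem 5: for a cost minimization allocation problem satisfying the
forcing condition, the output algorithm of any truthful VCG-based mechanism is either
optimal or degenerate. -/
theorem stmt_8 {n : ℕ} (hn : 0 < n) (m : Fin n → ℕ)
    (Vsp : ∀ i, Set (Fin (m i) → ℝ))
    (hdown : ∀ (i : Fin n) (v w : Fin (m i) → ℝ), v ∈ Vsp i → w ≤ v → w ∈ Vsp i)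
    (O : Finset (∀ i, Fin (m i) → Bool)) (hO : O.Nonempty)
    (u : ∀ i, (Fin (m i) → ℝ) → (Fin (m i) → Bool) → ℝ)
    (hindep : ∀ (i : Fin n) (v w : Fin (m i) → ℝ) (x : Fin (m i) → Bool),
      (∀ j, x j = true → v j = w j) → u i v x = u i w x)
    (hmono : ∀ (i : Fin n) (v w : Fin (m i) → ℝ) (x : Fin (m i) → Bool),
      w ≤ v → u i w x ≤ u i v x)
    (hforce : ∀ v : ∀ i, Fin (m i) → ℝ, (∀ i, v i ∈ Vsp i) →
      ∀ x ∈ O, ∀ y ∈ O, y ≠ x →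
        Filter.Tendsto (fun α : ℝ => cmapWelfare u (cmapForce v x α) y)
          Filter.atBot Filter.atBot)
    (k : (∀ i, Fin (m i) → ℝ) → (∀ i, Fin (m i) → Bool))
    (hk : ∀ v : ∀ i, Fin (m i) → ℝ, (∀ i, v i ∈ Vsp i) → k v ∈ O)
    (p : Fin n → (∀ i, Fin (m i) → ℝ) → ℝ)
    (h : Fin n → (∀ i, Fin (m i) → ℝ) → ℝ)
    (hInd : ∀ (i : Fin n) (w w' : ∀ j, Fin (m j) → ℝ),
      (∀ j, j ≠ i → w j = w' j) → h i w = h i w')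
    (hp : ∀ (i : Fin n) (w : ∀ j, Fin (m j) → ℝ),
      p i w = (∑ j ∈ Finset.univ.erase i, u j (w j) (k w j)) + h i w)
    (htruth : ∀ (i : Fin n) (vi : Fin (m i) → ℝ), vi ∈ Vsp i →
      ∀ w : ∀ j, Fin (m j) → ℝ, (∀ j, w j ∈ Vsp j) →
        u i vi (k (Function.update w i vi) i) + p i (Function.update w i vi) ≥
          u i vi (k w i) + p i w) :
    (∀ v : ∀ i, Fin (m i) → ℝ, (∀ i, v i ∈ Vsp i) →
        cmapWelfare u v (k v) = O.sup' hO (fun x => cmapWelfare u v x)) ∨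
    (∀ M : ℝ, ∃ v : ∀ i, Fin (m i) → ℝ, (∀ i, v i ∈ Vsp i) ∧
        (O.sup' hO (fun x => cmapWelfare u v x) - cmapWelfare u v (k v)) /
          (|O.sup' hO (fun x => cmapWelfare u v x)| + 1) > M) := by
  by_cases hdeg : (∀ M : ℝ, ∃ v : ∀ i, Fin (m i) → ℝ, (∀ i, v i ∈ Vsp i) ∧
        (O.sup' hO (fun x => cmapWelfare u v x) - cmapWelfare u v (k v)) /
          (|O.sup' hO (fun x => cmapWelfare u v x)| + 1) > M)
  · exact Or.inr hdeg
  push_neg at hdeg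
  obtain ⟨M, hM⟩ := hdeg
  left
  -- Single-deviation maximality: truthfulness + VCG payments imply that changing one
  -- agent's declaration cannot give a worse welfare (measured at the new profile).
  have L1 : ∀ (i : Fin n) (vi : Fin (m i) → ℝ) (w0 : ∀ j, Fin (m j) → ℝ),
      vi ∈ Vsp i → (∀ j, w0 j ∈ Vsp j) →
      cmapWelfare u (Function.update w0 i vi) (k w0) ≤
        cmapWelfare u (Function.update w0 i vi) (k (Function.update w0 i vi)) := by
    intro i vi w0 hvi hw0
    have ht := htruth i vi hvi w0 hw0
    rw [hp i (Function.update w0 i vi), hp i w0] at ht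
    have hh : h i (Function.update w0 i vi) = h i w0 :=
      hInd i _ _ (fun j hj => Function.update_of_ne hj _ _)
    rw [hh] at ht
    set v' := Function.update w0 i vi with hv'
    have e1 : cmapWelfare u v' (k v') =
        u i vi (k v' i) + ∑ j ∈ Finset.univ.erase i, u j (v' j) (k v' j) := by
      rw [cmapWelfare, ← Finset.add_sum_erase _ _ (Finset.mem_univ i)]
      congr 1
      rw [hv', Function.update_self]
    have e2 : cmapWelfare u v' (k w0) =
        u i vi (k w0 i) + ∑ j ∈ Finset.univ.erase i, u j (w0 j) (k w0 j) := by
      rw [cmapWelfare, ← Finset.add_sum_erase _ _ (Finset.mem_univ i)]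
      congr 1
      · rw [hv', Function.update_self]
      · refine Finset.sum_congr rfl (fun j hj => ?_)
        have hji : j ≠ i := (Finset.mem_erase.mp hj).1
        rw [hv', Function.update_of_ne hji]
    rw [e1, e2]
    linarith [ht]
  intro v hv
  have hkv := hk v hv
  refine le_antisymm (Finset.le_sup' _ hkv) (Finset.sup'_le _ _ ?_)
  intro y hy
  -- Goal: cmapWelfare u v y ≤ cmapWelfare u v (k v)
  set C := cmapWelfare u v y with hC
  -- choose a lower bound B for all coordinates of v
  obtain ⟨B, hB⟩ : ∃ B : ℝ, ∀ i j, B ≤ v i j := by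
    obtain ⟨B, hB⟩ := (Set.finite_range (fun q : Σ i, Fin (m i) => v q.1 q.2)).bddBelow
    exact ⟨B, fun i j => hB ⟨⟨i, j⟩, rfl⟩⟩
  -- basic facts about the hybrid profiles
  have hwle : ∀ (t : ℕ) (α : ℝ), α ≤ B → ∀ i, cmapMask v y t α i ≤ v i := by
    intro t α hα i j
    unfold cmapMask
    split
    · exact hα.trans (hB i j)
    · exact le_rfl
  have hwmem : ∀ (t : ℕ) (α : ℝ), α ≤ B → ∀ i, cmapMask v y t α i ∈ Vsp i :=
    fun t α hα i => hdown i (v i) _ (hv i) (hwle t α hα i)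
  have hwy : ∀ (t : ℕ) (α : ℝ), cmapWelfare u (cmapMask v y t α) y = C := by
    intro t α
    refine Finset.sum_congr rfl (fun i _ => ?_)
    refine hindep i _ _ _ (fun j hj => ?_)
    unfold cmapMask
    simp [hj]
  have hwn : ∀ α : ℝ, cmapMask v y n α = cmapForce v y α := by
    intro α
    funext i j
    unfold cmapMask cmapForce
    rcases Bool.eq_false_or_eq_true (y i j) with hb | hb <;> simp [hb, i.isLt]
  have hw0 : ∀ α : ℝ, cmapMask v y 0 α = v := by
    intro α
    funext i j
    simp [cmapMask]
  have hupdate : ∀ (t : ℕ) (ht : t < n) (α : ℝ),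
      cmapMask v y t α = Function.update (cmapMask v y (t + 1) α) ⟨t, ht⟩ (v ⟨t, ht⟩) := by
    intro t ht α
    funext i
    by_cases hi : i = (⟨t, ht⟩ : Fin n)
    · subst hi
      rw [Function.update_self]
      funext j
      simp [cmapMask]
    · rw [Function.update_of_ne hi]
      funext j
      have hne : (i : ℕ) ≠ t := fun hc => hi (Fin.ext hc)
      have : ((i : ℕ) < t ∧ y i j = false) ↔ ((i : ℕ) < t + 1 ∧ y i j = false) := by
        constructor
        · rintro ⟨h1, h2⟩; exact ⟨h1.trans (Nat.lt_succ_self t), h2⟩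
        · rintro ⟨h1, h2⟩; exact ⟨lt_of_le_of_ne (Nat.lt_succ_iff.mp h1) hne, h2⟩
      unfold cmapMask
      split
      · rw [if_pos (this.mp (by assumption))]
      · rw [if_neg (fun hc => (by assumption : ¬_) (this.mpr hc))]
  have hmonoprof : ∀ (t : ℕ) (α : ℝ), α ≤ B → ∀ i, cmapMask v y (t + 1) α i ≤ cmapMask v y t α i := by
    intro t α hα i j
    unfold cmapMask
    by_cases hc : (i : ℕ) < t ∧ y i j = false
    · rw [if_pos hc, if_pos ⟨hc.1.trans (Nat.lt_succ_self t), hc.2⟩]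
    · rw [if_neg hc]
      split
      · exact hα.trans (hB i j)
      · exact le_rfl
  -- L2 : forcing + non-degeneracy pins down the outcome on fully masked profiles
  have L2 : ∃ α1 : ℝ, ∀ α ≤ α1, α ≤ B → k (cmapForce v y α) = y := by
    set b := min (C - 1) (C - (M * (|C| + 1) + 1)) with hb
    have hev : ∀ᶠ α in Filter.atBot, ∀ z ∈ O.erase y,
        cmapWelfare u (cmapForce v y α) z ≤ b := by
      rw [Filter.eventually_all_finset]
      intro z hz
      have hzy : z ≠ y := (Finset.mem_erase.mp hz).1
      have hzO : z ∈ O := (Finset.mem_erase.mp hz).2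
      exact (hforce v hv y hy z hzO hzy).eventually_le_atBot b
    obtain ⟨α1, hα1⟩ := Filter.eventually_atBot.mp hev
    refine ⟨α1, fun α hα hαB => ?_⟩
    have hFle : ∀ i, cmapForce v y α i ≤ v i := by
      intro i j
      unfold cmapForce
      split
      · exact le_rfl
      · exact hαB.trans (hB i j)
    have hFmem : ∀ i, cmapForce v y α i ∈ Vsp i :=
      fun i => hdown i (v i) _ (hv i) (hFle i)
    have hFy : cmapWelfare u (cmapForce v y α) y = C := by
      refine Finset.sum_congr rfl (fun i _ => ?_)
      refine hindep i _ _ _ (fun j hj => ?_)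
      unfold cmapForce
      simp [hj]
    have hsup : O.sup' hO (fun x => cmapWelfare u (cmapForce v y α) x) = C := by
      refine le_antisymm (Finset.sup'_le _ _ (fun z hz => ?_)) ?_
      · by_cases hzy : z = y
        · subst hzy; rw [hFy]
        · have := hα1 α hα z (Finset.mem_erase.mpr ⟨hzy, hz⟩)
          calc cmapWelfare u (cmapForce v y α) z ≤ b := this
            _ ≤ C - 1 := min_le_left _ _
            _ ≤ C := by linarith
      · calc C = cmapWelfare u (cmapForce v y α) y := hFy.symm
          _ ≤ _ := Finset.le_sup' _ hy
    by_contra hne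
    have hkF : k (cmapForce v y α) ∈ O.erase y :=
      Finset.mem_erase.mpr ⟨hne, hk _ hFmem⟩
    have h1 : cmapWelfare u (cmapForce v y α) (k (cmapForce v y α)) ≤ b :=
      hα1 α hα _ hkF
    have h2 := hM (cmapForce v y α) hFmem
    rw [hsup] at h2
    have hpos : (0 : ℝ) < |C| + 1 := by positivity
    rw [div_le_iff₀ hpos] at h2
    have h3 : cmapWelfare u (cmapForce v y α) (k (cmapForce v y α)) ≤
        C - (M * (|C| + 1) + 1) := h1.trans (min_le_right _ _)
    linarith
  obtain ⟨α1, hL2⟩ := L2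
  -- the descending induction along hybrid profiles
  have key : ∀ d : ℕ, ∃ α0 : ℝ, α0 ≤ B ∧ ∀ α ≤ α0,
      C ≤ cmapWelfare u (cmapMask v y (n - d) α) (k (cmapMask v y (n - d) α)) := by
    intro d
    induction d with
    | zero =>
        refine ⟨min α1 B, min_le_right _ _, fun α hα => ?_⟩
        have hαα1 : α ≤ α1 := hα.trans (min_le_left _ _)
        have hαB : α ≤ B := hα.trans (min_le_right _ _)
        have hk' := hL2 α hαα1 hαB
        have hCe : cmapWelfare u (cmapForce v y α) y = C := by
          refine Finset.sum_congr rfl (fun i _ => ?_)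
          refine hindep i _ _ _ (fun j hj => ?_)
          unfold cmapForce
          simp [hj]
        rw [Nat.sub_zero, hwn α, hk', hCe]
    | succ d ih =>
        obtain ⟨α0, hα0B, hIH⟩ := ih
        by_cases hd : n - d = 0
        · have hd1 : n - (d + 1) = 0 := by omega
          refine ⟨α0, hα0B, fun α hα => ?_⟩
          have h5 := hIH α hα
          rw [hd] at h5
          rw [hd1]
          exact h5
        · set t := n - (d + 1) with htdef
          have htn : t < n := by omega
          have hsucc : t + 1 = n - d := by omega
          refine ⟨α0, hα0B, fun α hα => ?_⟩
          have hαB : α ≤ B := hα.trans hα0B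
          have hmem1 : ∀ j, cmapMask v y (t + 1) α j ∈ Vsp j := hwmem _ _ hαB
          have step := L1 ⟨t, htn⟩ (v ⟨t, htn⟩) (cmapMask v y (t + 1) α)
            (hv _) hmem1
          rw [← hupdate t htn α] at step
          have mono : cmapWelfare u (cmapMask v y (t + 1) α) (k (cmapMask v y (t + 1) α)) ≤
              cmapWelfare u (cmapMask v y t α) (k (cmapMask v y (t + 1) α)) :=
            Finset.sum_le_sum (fun i _ => hmono i _ _ _ (hmonoprof t α hαB i))
          have hIHα := hIH α hα
          rw [← hsucc] at hIHα
          linarith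
  obtain ⟨α0, _, hfin⟩ := key n
  have := hfin α0 le_rfl
  rw [Nat.sub_self, hw0 α0] at this
  exact this
end

section
/- In a CMAP, let v ∈ V, let y ∈ O satisfy g(v, y) = g_opt(v), and let z ∈ V satisfy z^i_j ≤ v^i_j for all i, j and z^i_j = v^i_j whenever y^i_j = 1. Then g(z, y) = g_opt(z). -/
/-- in a CMAP, if `y` is an optimal output for `v` and `z ≤ v` agrees with
`v` on all coordinates selected by `y`, then `y` is also optimal for `z`. -/
theorem stmt_9 {n : ℕ} (hn : 0 < n) (m : Fin n → ℕ)
    (Vsp : ∀ i, Set (Fin (m i) → ℝ))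
    (hdown : ∀ (i : Fin n) (v w : Fin (m i) → ℝ), v ∈ Vsp i → w ≤ v → w ∈ Vsp i)
    (O : Finset (∀ i, Fin (m i) → Bool)) (hO : O.Nonempty)
    (u : ∀ i, (Fin (m i) → ℝ) → (Fin (m i) → Bool) → ℝ)
    (hindep : ∀ (i : Fin n) (v w : Fin (m i) → ℝ) (x : Fin (m i) → Bool),
      (∀ j, x j = true → v j = w j) → u i v x = u i w x)
    (hmono : ∀ (i : Fin n) (v w : Fin (m i) → ℝ) (x : Fin (m i) → Bool),
      w ≤ v → u i w x ≤ u i v x)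
    (v : ∀ i, Fin (m i) → ℝ) (hv : ∀ i, v i ∈ Vsp i)
    (y : ∀ i, Fin (m i) → Bool) (hy : y ∈ O)
    (hyopt : cmapWelfare u v y = O.sup' hO (fun x => cmapWelfare u v x))
    (z : ∀ i, Fin (m i) → ℝ) (hz : ∀ i, z i ∈ Vsp i)
    (hzle : ∀ i, z i ≤ v i)
    (hzeq : ∀ (i : Fin n) (j : Fin (m i)), y i j = true → z i j = v i j) :
    cmapWelfare u z y = O.sup' hO (fun x => cmapWelfare u z x) := by
  have hzy : cmapWelfare u z y = cmapWelfare u v y := by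
    unfold cmapWelfare
    exact Finset.sum_congr rfl fun i _ => hindep i (z i) (v i) (y i) (fun j hj => hzeq i j hj)
  refine le_antisymm (Finset.le_sup' _ hy) (Finset.sup'_le _ _ fun x hx => ?_)
  rw [hzy, hyopt]
  calc cmapWelfare u z x ≤ cmapWelfare u v x :=
        Finset.sum_le_sum fun i _ => hmono i (v i) (z i) (x i) (hzle i)
    _ ≤ _ := Finset.le_sup' _ hx
end

section
/- Let (k, p) be a truthful VCG-based mechanism for a CMAP, let v ∈ V satisfy g(v, k(v)) < g_opt(v), let y ∈ O satisfy g(v, y) = g_opt(v), and let z^1 ∈ V^1 satisfy z^1_j ≤ v^1_j for all j and z^1_j = v^1_j whenever y^1_j = 1. Then, writing v_1 = (z^1, v^{-1}) for the profile v with agent 1's type replaced by z^1, one has g(v_1, k(v_1)) < g(v_1, y). -/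
/-- let `(k, p)` be a truthful VCG-based mechanism for a CMAP, let `v` be
a profile at which `k` is suboptimal, `y` an optimal output for `v`, and `z¹ ≤ v¹` a
type for agent 1 agreeing with `v¹` on the coordinates selected by `y`. Then at the
profile `v₁ = (z¹, v⁻¹)` the algorithm's output is still strictly worse than `y`. -/
theorem stmt_10 {n : ℕ} (hn : 0 < n) (m : Fin n → ℕ)
    (Vsp : ∀ i, Set (Fin (m i) → ℝ))
    (hdown : ∀ (i : Fin n) (v w : Fin (m i) → ℝ), v ∈ Vsp i → w ≤ v → w ∈ Vsp i)
    (O : Finset (∀ i, Fin (m i) → Bool)) (hO : O.Nonempty)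
    (u : ∀ i, (Fin (m i) → ℝ) → (Fin (m i) → Bool) → ℝ)
    (hindep : ∀ (i : Fin n) (v w : Fin (m i) → ℝ) (x : Fin (m i) → Bool),
      (∀ j, x j = true → v j = w j) → u i v x = u i w x)
    (hmono : ∀ (i : Fin n) (v w : Fin (m i) → ℝ) (x : Fin (m i) → Bool),
      w ≤ v → u i w x ≤ u i v x)
    (k : (∀ i, Fin (m i) → ℝ) → (∀ i, Fin (m i) → Bool))
    (hk : ∀ v : ∀ i, Fin (m i) → ℝ, (∀ i, v i ∈ Vsp i) → k v ∈ O)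
    (p : Fin n → (∀ i, Fin (m i) → ℝ) → ℝ)
    (h : Fin n → (∀ i, Fin (m i) → ℝ) → ℝ)
    (hInd : ∀ (i : Fin n) (w w' : ∀ j, Fin (m j) → ℝ),
      (∀ j, j ≠ i → w j = w' j) → h i w = h i w')
    (hp : ∀ (i : Fin n) (w : ∀ j, Fin (m j) → ℝ),
      p i w = (∑ j ∈ Finset.univ.erase i, u j (w j) (k w j)) + h i w)
    (htruth : ∀ (i : Fin n) (vi : Fin (m i) → ℝ), vi ∈ Vsp i →
      ∀ w : ∀ j, Fin (m j) → ℝ, (∀ j, w j ∈ Vsp j) →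
        u i vi (k (Function.update w i vi) i) + p i (Function.update w i vi) ≥
          u i vi (k w i) + p i w)
    (v : ∀ i, Fin (m i) → ℝ) (hv : ∀ i, v i ∈ Vsp i)
    (hsub : cmapWelfare u v (k v) < O.sup' hO (fun x => cmapWelfare u v x))
    (y : ∀ i, Fin (m i) → Bool) (hy : y ∈ O)
    (hyopt : cmapWelfare u v y = O.sup' hO (fun x => cmapWelfare u v x))
    (z1 : Fin (m ⟨0, hn⟩) → ℝ) (hz1 : z1 ∈ Vsp ⟨0, hn⟩)
    (hz1le : z1 ≤ v ⟨0, hn⟩)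
    (hz1eq : ∀ j : Fin (m ⟨0, hn⟩), y ⟨0, hn⟩ j = true → z1 j = v ⟨0, hn⟩ j) :
    cmapWelfare u (Function.update v ⟨0, hn⟩ z1) (k (Function.update v ⟨0, hn⟩ z1)) <
      cmapWelfare u (Function.update v ⟨0, hn⟩ z1) y := by
  set v1 : ∀ i, Fin (m i) → ℝ := Function.update v ⟨0, hn⟩ z1 with hv1
  set i0 : Fin n := ⟨0, hn⟩ with hi0
  have hv1mem : ∀ j, v1 j ∈ Vsp j := by
    intro j
    by_cases hj : j = i0
    · subst hj; simp only [hv1, Function.update_self]; exact hz1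
    · simpa [hv1, Function.update_of_ne (show j ≠ ⟨0, hn⟩ from hj)] using hv j
  have hupd : Function.update v1 i0 (v i0) = v := by
    simp +zetaDelta [hv1, Function.update_idem]
  have ht := htruth i0 (v i0) (hv i0) v1 hv1mem
  rw [hupd, hp i0 v, hp i0 v1] at ht
  have hh : h i0 v = h i0 v1 := by
    apply hInd
    intro j hj
    simp [hv1, Function.update_of_ne (show j ≠ ⟨0, hn⟩ from hj)]
  rw [hh] at ht
  have hL : u i0 (v i0) (k v i0) + ∑ j ∈ Finset.univ.erase i0, u j (v j) (k v j)
      = cmapWelfare u v (k v) := by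
    unfold cmapWelfare
    exact Finset.add_sum_erase Finset.univ (fun j => u j (v j) (k v j)) (Finset.mem_univ i0)
  have hR : u i0 (v1 i0) (k v1 i0) + ∑ j ∈ Finset.univ.erase i0, u j (v1 j) (k v1 j)
      = cmapWelfare u v1 (k v1) := by
    unfold cmapWelfare
    exact Finset.add_sum_erase Finset.univ (fun j => u j (v1 j) (k v1 j)) (Finset.mem_univ i0)
  have hmon : u i0 (v1 i0) (k v1 i0) ≤ u i0 (v i0) (k v1 i0) := by
    apply hmono
    simp only [hv1, Function.update_self]
    exact hz1le
  have h1 : cmapWelfare u v1 (k v1) ≤ cmapWelfare u v (k v) := by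
    rw [← hL, ← hR]; linarith
  have hy1 : cmapWelfare u v1 y = cmapWelfare u v y := by
    unfold cmapWelfare
    apply Finset.sum_congr rfl
    intro j _
    by_cases hj : j = i0
    · subst hj
      simp only [hv1, Function.update_self]
      exact hindep _ _ _ _ (fun j hj => hz1eq j hj)
    · rw [hv1, Function.update_of_ne hj]
  calc cmapWelfare u v1 (k v1) ≤ cmapWelfare u v (k v) := h1
    _ < cmapWelfare u v y := by rw [hyopt]; exact hsub
    _ = cmapWelfare u v1 y := hy1.symm
end

section
/- Fix an agent i with true valuation v^i and let b^i be an appeal-independent revision function for agent i, i.e., every action vector a^{-i} in the domain of b^i has all appeals equal to the empty appeal ⊥. Then there exists an appeal l^i such that the truthful action (v^i, l^i) is feasibly dominant with respect to b^i: for every a^{-i} in the domain of b^i, u^i((v^i, l^i), a^{-i}) ≥ u^i(b^i(a^{-i}), a^{-i}). -/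
/-- A valuation profile: one valuation per agent. -/
abbrev SCProfile (O : Type*) (n : ℕ) := Fin n → O → ℝ

/-- An appeal: a partial function from profiles to profiles, modelled via `Option`. -/
abbrev SCAppeal (O : Type*) (n : ℕ) := SCProfile O n → Option (SCProfile O n)

/-- The total welfare of output `o` at profile `v`. -/
def scWelfare {O : Type*} {n : ℕ} [Fintype (Fin n)] (v : SCProfile O n) (o : O) : ℝ :=
  ∑ i, v i o

/-- The candidate outputs of the second chance mechanism based on algorithm `k` at the
declared profile `w` and appeal profile `l`: `k(w)` together with `k(lⁱ(w))` for every
agent `i` whose appeal is defined at `w`. -/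
def scCandidates {O : Type*} {n : ℕ} (k : SCProfile O n → O)
    (w : SCProfile O n) (l : Fin n → SCAppeal O n) : Set O :=
  {o | o = k w ∨ ∃ (i : Fin n) (w' : SCProfile O n), l i w = some w' ∧ o = k w'}

/-- An action in the second chance mechanism: a declared valuation and an appeal. -/
abbrev SCAction (O : Type*) (n : ℕ) := (O → ℝ) × SCAppeal O n

/-- The empty appeal `⊥`: the appeal whose domain is empty. -/
def emptyAppeal (O : Type*) (n : ℕ) : SCAppeal O n := fun _ => none

/-- Agent `i`'s utility in the second chance mechanism based on `k` (with tie-breaking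
selection rule `choose` and functions `hⁱ`) when its true valuation is `v` and the
action profile is `a`: the value of the chosen output plus the VCG payment. -/
def scUtil {O : Type*} {n : ℕ} [Fintype (Fin n)]
    (choose : SCProfile O n → (Fin n → SCAppeal O n) → O)
    (h : Fin n → SCProfile O n → (Fin n → SCAppeal O n) → ℝ)
    (i : Fin n) (v : O → ℝ) (a : Fin n → SCAction O n) : ℝ :=
  let w : SCProfile O n := fun j => (a j).1
  let l : Fin n → SCAppeal O n := fun j => (a j).2
  v (choose w l) + ((∑ j ∈ Finset.univ.erase i, w j (choose w l)) + h i w l)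

/-- Theorem 7: in the second chance mechanism, an agent with an
appeal-independent revision function `b` (every action vector in the domain of `b` has
all appeals empty) has a feasibly dominant truthful action: there is an appeal `li`
such that for every action vector in the domain of `b`, playing `(v, li)` is at least
as good as playing the revised action. -/
theorem stmt_14 {O : Type*} [Fintype O] [Nonempty O] {n : ℕ} (hn : 0 < n)
    (k : SCProfile O n → O)
    (choose : SCProfile O n → (Fin n → SCAppeal O n) → O)
    (hchoose : ∀ (w : SCProfile O n) (l : Fin n → SCAppeal O n),
      choose w l ∈ scCandidates k w l ∧
      ∀ o ∈ scCandidates k w l, scWelfare w o ≤ scWelfare w (choose w l))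
    (h : Fin n → SCProfile O n → (Fin n → SCAppeal O n) → ℝ)
    (hInd : ∀ (i : Fin n) (w w' : SCProfile O n) (l l' : Fin n → SCAppeal O n),
      (∀ j, j ≠ i → w j = w' j) → (∀ j, j ≠ i → l j = l' j) → h i w l = h i w' l')
    (i : Fin n) (v : O → ℝ)
    (b : (Fin n → SCAction O n) → Option (SCAction O n))
    (hbInd : ∀ a a' : Fin n → SCAction O n, (∀ j, j ≠ i → a j = a' j) → b a = b a')
    (hbAppealFree : ∀ a : Fin n → SCAction O n, (b a).isSome →
      ∀ j, j ≠ i → (a j).2 = emptyAppeal O n) :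
    ∃ li : SCAppeal O n, ∀ (a : Fin n → SCAction O n) (a' : SCAction O n),
      b a = some a' →
      scUtil choose h i v (Function.update a i (v, li)) ≥
        scUtil choose h i v (Function.update a i a') := by
  classical
  have hex : ∀ (w : SCProfile O n) (l : Fin n → SCAppeal O n),
      ∃ p : SCProfile O n, k p = choose w l := by
    intro w l
    rcases (hchoose w l).1 with h1 | ⟨j, w', _, h2⟩
    · exact ⟨w, h1.symm⟩
    · exact ⟨w', h2.symm⟩
  set li : SCAppeal O n := fun u =>
    (b (fun j => (u j, emptyAppeal O n))).map
      (fun a' => Classical.choose (hex (Function.update u i a'.1)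
        (Function.update (fun _ => emptyAppeal O n) i a'.2))) with hli
  refine ⟨li, ?_⟩
  intro a a' hba
  set wt : SCProfile O n := fun j => (Function.update a i (v, li) j).1 with hwtdef
  set lt : Fin n → SCAppeal O n := fun j => (Function.update a i (v, li) j).2 with hltdef
  set wr : SCProfile O n := fun j => (Function.update a i a' j).1 with hwrdef
  set lr : Fin n → SCAppeal O n := fun j => (Function.update a i a' j).2 with hlrdef
  have hsome : (b a).isSome := by rw [hba]; rfl
  have hemp : ∀ j, j ≠ i → (a j).2 = emptyAppeal O n := hbAppealFree a hsome
  have hwt_ne : ∀ j, j ≠ i → wt j = (a j).1 := by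
    intro j hj; simp [hwtdef, Function.update_of_ne hj]
  have hwt_i : wt i = v := by simp [hwtdef]
  have hlt_ne : ∀ j, j ≠ i → lt j = (a j).2 := by
    intro j hj; simp [hltdef, Function.update_of_ne hj]
  have hlt_i : lt i = li := by simp [hltdef]
  have hwr_ne : ∀ j, j ≠ i → wr j = (a j).1 := by
    intro j hj; simp [hwrdef, Function.update_of_ne hj]
  have hwr_i : wr i = a'.1 := by simp [hwrdef]
  have hlr_ne : ∀ j, j ≠ i → lr j = (a j).2 := by
    intro j hj; simp [hlrdef, Function.update_of_ne hj]
  have hlr_i : lr i = a'.2 := by simp [hlrdef]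
  have hb2 : b (fun j => (wt j, emptyAppeal O n)) = some a' := by
    rw [← hba]; apply hbInd; intro j hj
    rw [hwt_ne j hj, ← hemp j hj]
  have hwr_eq : Function.update wt i a'.1 = wr := by
    funext j
    by_cases hj : j = i
    · subst hj; rw [Function.update_self, hwr_i]
    · rw [Function.update_of_ne hj, hwt_ne j hj, hwr_ne j hj]
  have hlr_eq : Function.update (fun _ => emptyAppeal O n) i a'.2 = lr := by
    funext j
    by_cases hj : j = i
    · subst hj; rw [Function.update_self, hlr_i]
    · rw [Function.update_of_ne hj, hlr_ne j hj, hemp j hj]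
  -- the appeal produces a profile whose image under k is the revised outcome
  set p : SCProfile O n := Classical.choose (hex (Function.update wt i a'.1)
      (Function.update (fun _ => emptyAppeal O n) i a'.2)) with hp
  have hkp : k p = choose wr lr := by
    rw [hp]
    refine (Classical.choose_spec (hex (Function.update wt i a'.1)
      (Function.update (fun _ => emptyAppeal O n) i a'.2))).trans ?_
    rw [hwr_eq, hlr_eq]
  have hli_wt : li wt = some p := by
    rw [hli]
    simp only [hb2, Option.map_some]
    rfl
  have hmem : choose wr lr ∈ scCandidates k wt lt := by
    refine Or.inr ⟨i, p, ?_, hkp.symm⟩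
    rw [hlt_i, hli_wt]
  have hwel : scWelfare wt (choose wr lr) ≤ scWelfare wt (choose wt lt) :=
    (hchoose wt lt).2 _ hmem
  have hh : h i wt lt = h i wr lr := by
    apply hInd
    · intro j hj; rw [hwt_ne j hj, hwr_ne j hj]
    · intro j hj; rw [hlt_ne j hj, hlr_ne j hj]
  have hsum : ∀ o : O, ∑ j ∈ Finset.univ.erase i, wr j o
      = ∑ j ∈ Finset.univ.erase i, wt j o := by
    intro o
    refine Finset.sum_congr rfl ?_
    intro j hj
    have hji : j ≠ i := Finset.ne_of_mem_erase hj
    rw [hwr_ne j hji, hwt_ne j hji]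
  have key : ∀ o : O, v o + ∑ j ∈ Finset.univ.erase i, wt j o = scWelfare wt o := by
    intro o
    rw [scWelfare, ← Finset.add_sum_erase _ _ (Finset.mem_univ i), hwt_i]
  show v (choose wt lt) + ((∑ j ∈ Finset.univ.erase i, wt j (choose wt lt)) + h i wt lt)
      ≥ v (choose wr lr) + ((∑ j ∈ Finset.univ.erase i, wr j (choose wr lr)) + h i wr lr)
  rw [← hh, hsum, ← add_assoc, ← add_assoc, key, key]
  exact add_le_add_left hwel _
end

section
/- Consider the second chance-IR mechanism for the combinatorial auction problem: the second chance mechanism whose output algorithm is the lowest type closure k̃ of k and whose functions are h^i(w^{-i}, l^{-i}) = −g((0^i, w^{-i}), k((0^i, w^{-i}))). For every agent i with true valuation v^i, every declaration profile w with w^i = v^i, and every appeal profile l, agent i's utility v^i(ô^i) + p^i is nonnegative, where ô is the allocation chosen by the mechanism. -/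
/-- The zero (lowest) valuation: value `0` for every bundle. -/
def zeroVal (S : Type*) : CAValuation S :=
  ⟨fun _ => 0, rfl, fun _ _ _ => le_rfl⟩

/-- the second chance-IR mechanism (the second chance mechanism based on
the lowest type closure `k̃` of `k`, with `hⁱ(w⁻ⁱ, l⁻ⁱ) = −g((0ⁱ, w⁻ⁱ), k((0ⁱ, w⁻ⁱ)))`)
satisfies individual rationality: a truthful agent's utility is nonnegative. -/
theorem stmt_17 {S : Type*} [DecidableEq S] [Fintype S] [Nonempty S]
    {n : ℕ} (hn : 0 < n)
    (k ktil : (Fin n → CAValuation S) → CAAllocation S n)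
    (hktil : ∀ w : Fin n → CAValuation S,
      (ktil w = k w ∨ ∃ i : Fin n, ktil w = k (Function.update w i (zeroVal S))) ∧
      welfare w (k w) ≤ welfare w (ktil w) ∧
      ∀ i : Fin n,
        welfare w (k (Function.update w i (zeroVal S))) ≤ welfare w (ktil w))
    (i : Fin n) (vi : CAValuation S)
    (w : Fin n → CAValuation S) (hw : w i = vi)
    (l : Fin n → (Fin n → CAValuation S) → Option (Fin n → CAValuation S))
    (ohat : CAAllocation S n)
    (hmem : ohat = ktil w ∨
      ∃ (j : Fin n) (w' : Fin n → CAValuation S), l j w = some w' ∧ ohat = ktil w')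
    (hmax : ∀ o : CAAllocation S n,
      (o = ktil w ∨
        ∃ (j : Fin n) (w' : Fin n → CAValuation S), l j w = some w' ∧ o = ktil w') →
      welfare w o ≤ welfare w ohat) :
    vi.val (ohat.1 i) +
      ((∑ j ∈ Finset.univ.erase i, (w j).val (ohat.1 j)) +
        -(welfare (Function.update w i (zeroVal S))
            (k (Function.update w i (zeroVal S))))) ≥ 0 := by
  set w0 := Function.update w i (zeroVal S) with hw0
  have hsum : vi.val (ohat.1 i) + ∑ j ∈ Finset.univ.erase i, (w j).val (ohat.1 j)
      = welfare w ohat := by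
    rw [welfare, ← Finset.add_sum_erase _ _ (Finset.mem_univ i), hw]
  have h1 : welfare w (ktil w) ≤ welfare w ohat := hmax _ (Or.inl rfl)
  have h2 : welfare w (k w0) ≤ welfare w (ktil w) := (hktil w).2.2 i
  have h3 : welfare w0 (k w0) ≤ welfare w (k w0) := by
    apply Finset.sum_le_sum
    intro j _
    by_cases hj : j = i
    · subst hj
      simp only [hw0, Function.update_self, zeroVal]
      have := (w j).mono ∅ ((k w0).1 j) (Finset.empty_subset _)
      rw [(w j).val_empty] at this
      exact this
    · simp [hw0, Function.update_of_ne hj]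
  linarith
end
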